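/- arXiv:1510.04335 — 9 statements merged into one kernel-verified Lean document; each statement's English description precedes it below -/
import Mathlib

section
/- Let a = (a_1,…,a_N) with all a_i > 0. Define V_1(a) = [a_1^{-1} 1_{N−1}, −diag(a_2^{-1},…,a_N^{-1})] ∈ ℝ^{(N−1)×N}, V_2(a) = diag(a_2^{-1},…,a_N^{-1}) + a_1^{-1} 1_{N−1} 1_{N−1}^T ∈ ℝ^{(N−1)×(N−1)}, and V_3 = [−1_{N−1}, I_{N−1}] ∈ ℝ^{(N−1)×N}. Then V_2(a) is invertible and L(a) = −V_1(a)^T V_2(a)^{-1} V_3. -/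
open Matrix

/-- `Lmat a = I_N - (∑ i, a i)⁻¹ • 1_N aᵀ`. -/
noncomputable def Lmat {N : ℕ} (a : Fin N → ℝ) : Matrix (Fin N) (Fin N) ℝ :=
  1 - (∑ i, a i)⁻¹ • Matrix.vecMulVec (fun _ => 1) a

/-- `V₁(a) = [a₁⁻¹ 1_{N−1}, −diag(a₂⁻¹,…,a_N⁻¹)] ∈ ℝ^{(N−1)×N}` (here `N = n+1`). -/
noncomputable def V1 {n : ℕ} (a : Fin (n + 1) → ℝ) : Matrix (Fin n) (Fin (n + 1)) ℝ :=
  Matrix.of fun i j => if j = 0 then (a 0)⁻¹ else if j = i.succ then -(a j)⁻¹ else 0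

/-- `V₂(a) = diag(a₂⁻¹,…,a_N⁻¹) + a₁⁻¹ 1_{N−1} 1_{N−1}ᵀ ∈ ℝ^{(N−1)×(N−1)}`. -/
noncomputable def V2 {n : ℕ} (a : Fin (n + 1) → ℝ) : Matrix (Fin n) (Fin n) ℝ :=
  Matrix.diagonal (fun i => (a i.succ)⁻¹) +
    (a 0)⁻¹ • Matrix.vecMulVec (fun _ => 1) (fun _ => 1)

/-- `V₃ = [−1_{N−1}, I_{N−1}] ∈ ℝ^{(N−1)×N}`. -/
def V3 {n : ℕ} : Matrix (Fin n) (Fin (n + 1)) ℝ :=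
  Matrix.of fun i j => if j = 0 then -1 else if j = i.succ then 1 else 0

noncomputable def Wmat {n : ℕ} (a : Fin (n + 1) → ℝ) : Matrix (Fin n) (Fin n) ℝ :=
  Matrix.of fun i j =>
    (if i = j then a i.succ else 0) - a i.succ * a j.succ / (∑ i, a i)

section aux
variable {n : ℕ} (a : Fin (n + 1) → ℝ)

lemma sum_pos' (ha : ∀ i, 0 < a i) : (0:ℝ) < ∑ i, a i :=
  Finset.sum_pos (fun i _ => ha i) Finset.univ_nonempty

lemma sum_succ_eq : (∑ i : Fin n, a i.succ) = (∑ i, a i) - a 0 := by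
  rw [Fin.sum_univ_succ]; ring

lemma colsum_W (ha : ∀ i, 0 < a i) (j : Fin n) :
    (∑ k : Fin n, Wmat a k j) = a 0 * a j.succ / (∑ i, a i) := by
  have hS : (∑ i, a i) ≠ 0 := (sum_pos' a ha).ne'
  simp only [Wmat, Matrix.of_apply, Finset.sum_sub_distrib]
  rw [Finset.sum_ite_eq', ← Finset.sum_div, ← Finset.sum_mul, sum_succ_eq a]
  simp only [Finset.mem_univ, if_true]
  field_simp
  ring

lemma V2_mul_W (ha : ∀ i, 0 < a i) : V2 a * Wmat a = 1 := by
  have hS : (∑ i, a i) ≠ 0 := (sum_pos' a ha).ne'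
  ext i j
  rw [Matrix.mul_apply]
  simp only [V2, Matrix.add_apply, Matrix.diagonal_apply, Matrix.smul_apply,
    Matrix.vecMulVec_apply, smul_eq_mul, mul_one, add_mul, Finset.sum_add_distrib,
    ite_mul, zero_mul]
  rw [Finset.sum_ite_eq, ← Finset.mul_sum, colsum_W a ha]
  simp only [Finset.mem_univ, if_true, Wmat, Matrix.of_apply]
  have h1 : (a i.succ) ≠ 0 := (ha _).ne'
  have h0 : (a 0) ≠ 0 := (ha 0).ne'
  rw [Matrix.one_apply]
  rcases eq_or_ne i j with h | h
  · subst h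
    simp only [if_pos rfl, mul_sub, inv_mul_cancel₀ h1]
    rw [mul_div_assoc, mul_div_assoc, ← mul_assoc, ← mul_assoc,
      inv_mul_cancel₀ h1, inv_mul_cancel₀ h0]
    rw [if_pos trivial, if_pos trivial, inv_mul_cancel₀ h1]
    ring
  · simp only [if_neg h, zero_sub, mul_neg]
    rw [mul_div_assoc, mul_div_assoc, ← mul_assoc, ← mul_assoc,
      inv_mul_cancel₀ h1, inv_mul_cancel₀ h0]
    ring

lemma V1T_mul_W (ha : ∀ i, 0 < a i) :
    (V1 a)ᵀ * Wmat a =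
      Matrix.of fun p j => a j.succ / (∑ i, a i) - (if p = j.succ then 1 else 0) := by
  have hS : (∑ i, a i) ≠ 0 := (sum_pos' a ha).ne'
  have h0 : (a 0) ≠ 0 := (ha 0).ne'
  ext p j
  rw [Matrix.mul_apply]
  simp only [Matrix.transpose_apply, V1, Matrix.of_apply]
  induction p using Fin.cases with
  | zero =>
      simp only [if_pos rfl, if_true]
      rw [← Finset.mul_sum, colsum_W a ha]
      have : ((0 : Fin (n+1)) = j.succ) ↔ False := by
        simp [eq_comm, Fin.succ_ne_zero j]
      simp only [Matrix.of_apply, this, if_false]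
      field_simp
      ring
  | succ k =>
      have hk : ∀ i : Fin n, (Fin.succ k = Fin.succ i) ↔ (i = k) := by
        intro i; constructor <;> intro h <;> simp_all [Fin.succ_inj, eq_comm]
      simp only [Fin.succ_ne_zero, if_false, hk, ite_mul, zero_mul]
      rw [Finset.sum_ite_eq']
      simp only [Finset.mem_univ, if_true, Wmat, Matrix.of_apply]
      have h1 : (a k.succ) ≠ 0 := (ha _).ne'
      rcases eq_or_ne k j with h | h
      · subst h
        simp only [if_pos rfl, mul_sub, neg_mul, neg_sub, if_pos rfl]
        rw [if_pos trivial, if_pos trivial, inv_mul_cancel₀ h1, ← mul_div_assoc,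
          ← mul_assoc, inv_mul_cancel₀ h1, one_mul]
        ring
      · simp only [if_neg h, if_neg (Ne.symm h), zero_sub, mul_neg, neg_neg, sub_zero]
        field_simp

lemma M_mul_V3 (ha : ∀ i, 0 < a i) :
    (Matrix.of fun (p : Fin (n+1)) (j : Fin n) =>
        a j.succ / (∑ i, a i) - (if p = j.succ then 1 else 0)) * V3 (n := n) = -Lmat a := by
  have hS : (∑ i, a i) ≠ 0 := (sum_pos' a ha).ne'
  ext p q
  rw [Matrix.mul_apply]
  simp only [Matrix.of_apply, V3, Lmat, Matrix.neg_apply, Matrix.sub_apply,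
    Matrix.smul_apply, Matrix.vecMulVec_apply, Matrix.one_apply, smul_eq_mul, one_mul]
  induction q using Fin.cases with
  | zero =>
      simp only [if_pos rfl, if_true, mul_neg, mul_one, neg_sub]
      rw [Finset.sum_sub_distrib, ← Finset.sum_div, sum_succ_eq a]
      induction p using Fin.cases with
      | zero =>
          have h0j : ∀ j : Fin n, ((0 : Fin (n+1)) = j.succ) ↔ False := by
            intro j; simp [eq_comm, Fin.succ_ne_zero j]
          simp only [h0j, if_false, Finset.sum_const_zero, zero_sub, if_pos rfl]
          field_simp
          try ring
          simp
      | succ k =>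
          have hkj : ∀ j : Fin n, (Fin.succ k = Fin.succ j) ↔ (j = k) := by
            intro j; constructor <;> intro h <;> simp_all [Fin.succ_inj, eq_comm]
          simp only [hkj]
          rw [Finset.sum_boole]
          simp only [Finset.filter_eq', Finset.mem_univ, if_true, Finset.card_singleton]
          have hk0 : ((Fin.succ k : Fin (n+1)) = 0) ↔ False := by simp [Fin.succ_ne_zero]
          simp only [hk0, if_false]
          field_simp
          try ring
  | succ m =>
      have hm0 : ((m.succ : Fin (n+1)) = 0) ↔ False := by simp [Fin.succ_ne_zero]
      have hmj : ∀ j : Fin n, ((m.succ : Fin (n+1)) = j.succ) ↔ (j = m) := by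
        intro j; constructor <;> intro h <;> simp_all [Fin.succ_inj, eq_comm]
      simp only [hm0, if_false, hmj, mul_ite, mul_one, mul_zero]
      rw [Finset.sum_ite_eq']
      simp only [Finset.mem_univ, if_true]
      by_cases h : p = m.succ <;> simp [h] <;> ring

end aux

/-- For positive weights `a`, the matrix `V₂(a)` is invertible and
`L(a) = −V₁(a)ᵀ V₂(a)⁻¹ V₃`. -/
theorem lmat_factorization {n : ℕ} (a : Fin (n + 1) → ℝ) (ha : ∀ i, 0 < a i) :
    IsUnit (V2 a) ∧ Lmat a = -((V1 a)ᵀ * (V2 a)⁻¹ * V3) := by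
  have hVW := V2_mul_W a ha
  have hinv : (V2 a)⁻¹ = Wmat a := Matrix.inv_eq_right_inv hVW
  haveI := invertibleOfRightInverse _ _ hVW
  refine ⟨isUnit_of_invertible _, ?_⟩
  rw [hinv, V1T_mul_W a ha]
  exact neg_eq_iff_eq_neg.mp (M_mul_V3 a ha).symm
end

section
/- Let C ∈ ℝ^{p×n} have full row rank, let P ∈ ℝ^{n×n} be nonsingular with ker C P-invariant (P v ∈ ker C for every v ∈ ker C), and let W ∈ ℝ^{n×n} be such that C W C^T is invertible. Then C P W P^T C^T is invertible and P^T C^T (C P W P^T C^T)^{-1} C P = C^T (C W C^T)^{-1} C. -/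
open Matrix

/-- If `C ∈ ℝ^{p×n}` has full row rank, `P ∈ ℝ^{n×n}` is nonsingular with
`ker C` `P`-invariant, and `W ∈ ℝ^{n×n}` is such that `C W Cᵀ` is invertible, then
`C P W Pᵀ Cᵀ` is invertible and `Pᵀ Cᵀ (C P W Pᵀ Cᵀ)⁻¹ C P = Cᵀ (C W Cᵀ)⁻¹ C`. -/
theorem gramian_kernel_invariance {p n : ℕ}
    (C : Matrix (Fin p) (Fin n) ℝ) (P W : Matrix (Fin n) (Fin n) ℝ)
    (hC : C.rank = p)
    (hP : IsUnit P)
    (hinv : ∀ v : Fin n → ℝ, C.mulVec v = 0 → C.mulVec (P.mulVec v) = 0)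
    (hW : IsUnit (C * W * Cᵀ)) :
    IsUnit (C * P * W * Pᵀ * Cᵀ) ∧
      Pᵀ * Cᵀ * (C * P * W * Pᵀ * Cᵀ)⁻¹ * C * P = Cᵀ * (C * W * Cᵀ)⁻¹ * C := by
  classical
  have hPd : IsUnit P.det := (Matrix.isUnit_iff_isUnit_det P).mp hP
  have hrange : LinearMap.range C.mulVecLin = ⊤ := by
    apply Submodule.eq_top_of_finrank_eq
    have h0 : C.rank = Module.finrank ℝ (LinearMap.range C.mulVecLin) := rfl
    rw [← h0, hC, Module.finrank_fintype_fun_eq_card, Fintype.card_fin]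
  obtain ⟨g, hg⟩ := LinearMap.exists_rightInverse_of_surjective C.mulVecLin hrange
  set B : Matrix (Fin n) (Fin p) ℝ := LinearMap.toMatrix' g with hBdef
  have hCB : C * B = 1 := by
    apply Matrix.toLin'.injective
    rw [Matrix.toLin'_mul, Matrix.toLin'_one, hBdef, Matrix.toLin'_toMatrix']
    exact hg
  set M : Matrix (Fin p) (Fin p) ℝ := C * P * B with hMdef
  have hMC : M * C = C * P := by
    apply Matrix.toLin'.injective
    apply LinearMap.ext
    intro v
    have hker : C.mulVec (v - B.mulVec (C.mulVec v)) = 0 := by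
      rw [Matrix.mulVec_sub, Matrix.mulVec_mulVec, hCB, Matrix.one_mulVec, sub_self]
    have h1 := hinv _ hker
    rw [Matrix.mulVec_sub, Matrix.mulVec_sub, sub_eq_zero] at h1
    simp only [Matrix.toLin'_apply, hMdef, ← Matrix.mulVec_mulVec]
    rw [← h1]
  have hMunit : IsUnit M := by
    have h1 : M * (C * P⁻¹ * B) = 1 := by
      have h2 : M * (C * P⁻¹ * B) = (M * C) * P⁻¹ * B := by
        simp only [Matrix.mul_assoc]
      rw [h2, hMC, Matrix.mul_assoc C P P⁻¹, Matrix.mul_nonsing_inv P hPd,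
        Matrix.mul_one, hCB]
    exact ⟨⟨M, C * P⁻¹ * B, h1, mul_eq_one_comm.mp h1⟩, rfl⟩
  have hMd : IsUnit M.det := (Matrix.isUnit_iff_isUnit_det M).mp hMunit
  have hMTd : IsUnit Mᵀ.det := by rw [Matrix.det_transpose]; exact hMd
  have hMT : IsUnit Mᵀ := (Matrix.isUnit_iff_isUnit_det Mᵀ).mpr hMTd
  have hT : Pᵀ * Cᵀ = Cᵀ * Mᵀ := by
    rw [← Matrix.transpose_mul, ← Matrix.transpose_mul, hMC]
  have hfact : C * P * W * Pᵀ * Cᵀ = M * (C * W * Cᵀ) * Mᵀ := by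
    calc C * P * W * Pᵀ * Cᵀ = (C * P) * W * (Pᵀ * Cᵀ) := by
          simp only [Matrix.mul_assoc]
      _ = (M * C) * W * (Cᵀ * Mᵀ) := by rw [hMC, hT]
      _ = M * (C * W * Cᵀ) * Mᵀ := by simp only [Matrix.mul_assoc]
  have hUnit : IsUnit (C * P * W * Pᵀ * Cᵀ) := by
    rw [hfact]; exact (hMunit.mul hW).mul hMT
  refine ⟨hUnit, ?_⟩
  have hcp : M⁻¹ * (C * P) = C := by
    rw [← hMC, ← Matrix.mul_assoc, Matrix.nonsing_inv_mul M hMd, Matrix.one_mul]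
  have htp : Pᵀ * Cᵀ * Mᵀ⁻¹ = Cᵀ := by
    rw [hT, Matrix.mul_assoc, Matrix.mul_nonsing_inv Mᵀ hMTd, Matrix.mul_one]
  rw [hfact, Matrix.mul_inv_rev, Matrix.mul_inv_rev]
  simp only [Matrix.mul_assoc]
  rw [hcp, ← Matrix.mul_assoc Cᵀ Mᵀ⁻¹, ← Matrix.mul_assoc Pᵀ (Cᵀ * Mᵀ⁻¹),
    ← Matrix.mul_assoc Pᵀ Cᵀ Mᵀ⁻¹, htp]
end

section
/- Fix t_0 < T < ∞ and assume the output controllability Gramian W(t_0, T) is invertible. Given initial states x_0 = (x_1(t_0),…,x_N(t_0)) ∈ ℝ^{nN}, define the open-loop control u*(t) = −(L(a) ⊗ (B^T e^{A^T(T−t)} C^T W(t_0,T)^{-1} C e^{A(T−t_0)})) x_0. Then: (i) the trajectories x_i(t) = e^{A(t−t_0)} x_i(t_0) + ∫_{t_0}^t e^{A(t−s)} B u_i^*(s) ds satisfy C x_i(T) = C x_j(T) for all i, j; and (ii) for every control u = (u_1,…,u_N) ∈ L²([t_0,T]; ℝ^{mN}) whose trajectories (given by the same variation-of-constants formula) satisfy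 C x_i(T) = C x_j(T) for all i, j, one has ∫_{t_0}^T Σ_{i=1}^N a_i ‖u_i(t)‖² dt ≥ ∫_{t_0}^T Σ_{i=1}^N a_i ‖u_i^*(t)‖² dt. -/
open Matrix MeasureTheory

section expcont
attribute [local instance] Matrix.linftyOpNormedRing Matrix.linftyOpNormedAlgebra Matrix.instCompleteSpace

lemma exp_cont_aux {n : ℕ} (A : Matrix (Fin n) (Fin n) ℝ) (T : ℝ) :
    Continuous fun t : ℝ => NormedSpace.exp ((T - t) • A) :=
  NormedSpace.exp_continuous.comp (((continuous_const.sub continuous_id).smul continuous_const))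
end expcont

attribute [local instance] Matrix.normedAddCommGroup Matrix.normedSpace

noncomputable instance matENormedAddCommMonoidAux {p q : ℕ} :
    ENormedAddCommMonoid (Matrix (Fin p) (Fin q) ℝ) :=
  inferInstanceAs (ENormedAddCommMonoid (Fin p → Fin q → ℝ))

instance matPseudoMetrizableAux {p q : ℕ} :
    TopologicalSpace.PseudoMetrizableSpace (Matrix (Fin p) (Fin q) ℝ) :=
  inferInstanceAs (TopologicalSpace.PseudoMetrizableSpace (Fin p → Fin q → ℝ))

/-- The output controllability Gramian
`W(t,T) = ∫_t^T C e^{A(T−s)} B Bᵀ e^{Aᵀ(T−s)} Cᵀ ds`. -/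
noncomputable def gramianW {n m p : ℕ} (A : Matrix (Fin n) (Fin n) ℝ)
    (B : Matrix (Fin n) (Fin m) ℝ) (C : Matrix (Fin p) (Fin n) ℝ) (t T : ℝ) :
    Matrix (Fin p) (Fin p) ℝ :=
  ∫ s in t..T, C * NormedSpace.exp ((T - s) • A) * B * Bᵀ *
      NormedSpace.exp ((T - s) • Aᵀ) * Cᵀ

/-- The optimal open-loop control
`u*(t) = −(L(a) ⊗ (Bᵀ e^{Aᵀ(T−t)} Cᵀ W(t₀,T)⁻¹ C e^{A(T−t₀)})) x₀`. -/
noncomputable def ustar {n m p N : ℕ} (A : Matrix (Fin n) (Fin n) ℝ)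
    (B : Matrix (Fin n) (Fin m) ℝ) (C : Matrix (Fin p) (Fin n) ℝ)
    (a : Fin N → ℝ) (x₀ : Fin N × Fin n → ℝ) (t₀ T t : ℝ) : Fin N × Fin m → ℝ :=
  -(Matrix.kroneckerMap (· * ·) (Lmat a)
      (Bᵀ * NormedSpace.exp ((T - t) • Aᵀ) * Cᵀ * (gramianW A B C t₀ T)⁻¹ *
        C * NormedSpace.exp ((T - t₀) • A))).mulVec x₀

/-- The variation-of-constants trajectory of agent `i` under the stacked control `u`:
`xᵢ(t) = e^{A(t−t₀)} xᵢ(t₀) + ∫_{t₀}^t e^{A(t−s)} B uᵢ(s) ds`. -/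
noncomputable def traj {n m N : ℕ} (A : Matrix (Fin n) (Fin n) ℝ)
    (B : Matrix (Fin n) (Fin m) ℝ) (u : ℝ → Fin N × Fin m → ℝ)
    (x₀ : Fin N × Fin n → ℝ) (t₀ : ℝ) (i : Fin N) (t : ℝ) : Fin n → ℝ :=
  (NormedSpace.exp ((t - t₀) • A)).mulVec (fun k => x₀ (i, k)) +
    ∫ s in t₀..t, (NormedSpace.exp ((t - s) • A) * B).mulVec (fun k => u s (i, k))

namespace ConsensusAux

/-- mulVec with fixed vector, as a CLM in the matrix argument. -/
noncomputable def mulVecCLM {p q : ℕ} (v : Fin q → ℝ) :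
    Matrix (Fin p) (Fin q) ℝ →L[ℝ] (Fin p → ℝ) :=
  LinearMap.toContinuousLinearMap
    { toFun := fun M => M.mulVec v
      map_add' := fun M N => Matrix.add_mulVec M N v
      map_smul' := fun c M => Matrix.smul_mulVec c M v }

/-- right-multiplication by a fixed matrix, as a CLM. -/
noncomputable def mulConstCLM {p q r : ℕ} (Q : Matrix (Fin q) (Fin r) ℝ) :
    Matrix (Fin p) (Fin q) ℝ →L[ℝ] Matrix (Fin p) (Fin r) ℝ :=
  LinearMap.toContinuousLinearMap
    { toFun := fun M => M * Q
      map_add' := fun M N => Matrix.add_mul M N Q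
      map_smul' := fun c M => Matrix.smul_mul c M Q }

lemma integral_mulVec_const {p q : ℕ} {f : ℝ → Matrix (Fin p) (Fin q) ℝ} {a b : ℝ}
    (hf : IntervalIntegrable f volume a b) (v : Fin q → ℝ) :
    ∫ s in a..b, (f s).mulVec v = (∫ s in a..b, f s).mulVec v :=
  (mulVecCLM v).intervalIntegral_comp_comm hf

lemma integral_mul_const {p q r : ℕ} {f : ℝ → Matrix (Fin p) (Fin q) ℝ} {a b : ℝ}
    (hf : IntervalIntegrable f volume a b) (Q : Matrix (Fin q) (Fin r) ℝ) :
    ∫ s in a..b, f s * Q = (∫ s in a..b, f s) * Q :=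
  (mulConstCLM Q).intervalIntegral_comp_comm hf

/-- mulVec by fixed matrix as CLM on vectors. -/
noncomputable def mulVecVCLM {p q : ℕ} (P : Matrix (Fin p) (Fin q) ℝ) :
    (Fin q → ℝ) →L[ℝ] (Fin p → ℝ) :=
  LinearMap.toContinuousLinearMap P.mulVecLin

lemma integral_const_mulVec {p q : ℕ} {f : ℝ → Fin q → ℝ} {a b : ℝ}
    (hf : IntervalIntegrable f volume a b) (P : Matrix (Fin p) (Fin q) ℝ) :
    ∫ s in a..b, P.mulVec (f s) = P.mulVec (∫ s in a..b, f s) :=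
  (mulVecVCLM P).intervalIntegral_comp_comm hf

noncomputable def dotCLM {q : ℕ} (z : Fin q → ℝ) : (Fin q → ℝ) →L[ℝ] ℝ :=
  LinearMap.toContinuousLinearMap
    { toFun := fun w => z ⬝ᵥ w
      map_add' := fun x y => dotProduct_add z x y
      map_smul' := fun c x => dotProduct_smul c z x }

lemma integral_dot {q : ℕ} {f : ℝ → Fin q → ℝ} {a b : ℝ}
    (hf : IntervalIntegrable f volume a b) (z : Fin q → ℝ) :
    ∫ s in a..b, z ⬝ᵥ f s = z ⬝ᵥ (∫ s in a..b, f s) :=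
  (dotCLM z).intervalIntegral_comp_comm hf

lemma norm_mulVec_le {r q : ℕ} (X : Matrix (Fin r) (Fin q) ℝ) (y : Fin q → ℝ) :
    ‖X.mulVec y‖ ≤ q * ‖X‖ * ‖y‖ := by
  have hnn : (0:ℝ) ≤ q * ‖X‖ * ‖y‖ := by positivity
  rw [pi_norm_le_iff_of_nonneg hnn]
  intro j
  calc ‖(X.mulVec y) j‖ = |∑ k, X j k * y k| := rfl
    _ ≤ ∑ k, |X j k * y k| := Finset.abs_sum_le_sum_abs _ _
    _ ≤ ∑ _k : Fin q, ‖X‖ * ‖y‖ := by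
        refine Finset.sum_le_sum fun k _ => ?_
        rw [abs_mul]
        exact mul_le_mul (X.norm_entry_le_entrywise_sup_norm)
          (norm_le_pi_norm y k) (abs_nonneg _) (norm_nonneg _)
    _ = q * ‖X‖ * ‖y‖ := by simp [Finset.sum_const, mul_assoc]

lemma intervalIntegrable_mulVec {r q : ℕ} {t₀ T : ℝ} (hle : t₀ ≤ T)
    {M : ℝ → Matrix (Fin r) (Fin q) ℝ} (hM : Continuous M)
    {g : ℝ → Fin q → ℝ} (hg : IntegrableOn g (Set.Ioc t₀ T) volume) :
    IntervalIntegrable (fun s => (M s).mulVec (g s)) volume t₀ T := by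
  rw [intervalIntegrable_iff_integrableOn_Ioc_of_le hle]
  obtain ⟨K, hK⟩ := (isCompact_Icc (a := t₀) (b := T)).exists_bound_of_continuousOn
    hM.continuousOn
  have hK0 : 0 ≤ K := le_trans (norm_nonneg _) (hK t₀ (by simp [hle]))
  refine (hg.norm.const_mul (q * K)).mono' ?_ ?_
  · have hφ : Continuous fun Xy : Matrix (Fin r) (Fin q) ℝ × (Fin q → ℝ) =>
        Xy.1.mulVec Xy.2 := Continuous.matrix_mulVec continuous_fst continuous_snd
    exact hφ.comp_aestronglyMeasurable
      ((hM.stronglyMeasurable.aestronglyMeasurable).prodMk hg.aestronglyMeasurable)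
  · filter_upwards [ae_restrict_mem measurableSet_Ioc] with s hs
    calc ‖(M s).mulVec (g s)‖ ≤ q * ‖M s‖ * ‖g s‖ := norm_mulVec_le _ _
      _ ≤ q * K * ‖g s‖ := by
          have : ‖M s‖ ≤ K := hK s (Set.Ioc_subset_Icc_self hs)
          gcongr
      _ = q * K * ‖g s‖ := rfl


section main

variable {n m p N : ℕ} (A : Matrix (Fin n) (Fin n) ℝ) (B : Matrix (Fin n) (Fin m) ℝ)
  (C : Matrix (Fin p) (Fin n) ℝ) (a : Fin N → ℝ) (x₀ : Fin N × Fin n → ℝ) (t₀ T : ℝ)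

noncomputable def zvec (i : Fin N) : Fin n → ℝ := fun k => ∑ j, Lmat a i j * x₀ (j, k)

lemma zvec_eq (i : Fin N) (k : Fin n) :
    zvec a x₀ i k = x₀ (i, k) - (∑ j, a j)⁻¹ * ∑ j, a j * x₀ (j, k) := by
  unfold zvec Lmat
  simp only [Matrix.sub_apply, Matrix.smul_apply, Matrix.vecMulVec_apply, Matrix.one_apply,
    smul_eq_mul, one_mul, sub_mul, ite_mul, zero_mul]
  rw [Finset.sum_sub_distrib, Finset.sum_ite_eq Finset.univ i (fun j => x₀ (j, k))]
  simp [Finset.mul_sum, mul_assoc]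

lemma sum_smul_zvec (ha : ∀ i, 0 < a i) : (∑ i, a i • zvec a x₀ i) = 0 := by
  funext k
  simp only [Finset.sum_apply, Pi.smul_apply, Pi.zero_apply, smul_eq_mul]
  rcases isEmpty_or_nonempty (Fin N) with hN | hN
  · simp
  · have hpos : 0 < ∑ j, a j := Finset.sum_pos (fun j _ => ha j) Finset.univ_nonempty
    simp only [zvec_eq, mul_sub]
    rw [Finset.sum_sub_distrib]
    rw [← Finset.sum_mul, ← mul_assoc, mul_inv_cancel₀ hpos.ne',
      one_mul, sub_self]

lemma x0_sub_zvec (i : Fin N) :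
    (fun k => x₀ (i, k)) - zvec a x₀ i = fun k => (∑ j, a j)⁻¹ * ∑ j, a j * x₀ (j, k) := by
  funext k
  simp [zvec_eq a x₀ i k]

noncomputable def MmatD (t : ℝ) : Matrix (Fin m) (Fin n) ℝ :=
  Bᵀ * NormedSpace.exp ((T - t) • Aᵀ) * Cᵀ * (gramianW A B C t₀ T)⁻¹ *
    C * NormedSpace.exp ((T - t₀) • A)

noncomputable def GmatD (s : ℝ) : Matrix (Fin p) (Fin m) ℝ :=
  C * NormedSpace.exp ((T - s) • A) * B

lemma cont_G : Continuous (GmatD A B C T) :=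
  (continuous_const.matrix_mul (exp_cont_aux A T)).matrix_mul continuous_const

lemma cont_M : Continuous (MmatD A B C t₀ T) :=
  ((((continuous_const.matrix_mul (exp_cont_aux Aᵀ T)).matrix_mul
    continuous_const).matrix_mul continuous_const).matrix_mul
    continuous_const).matrix_mul continuous_const

lemma ustar_comp (i : Fin N) (t : ℝ) :
    (fun k => ustar A B C a x₀ t₀ T t (i, k)) =
      -(MmatD A B C t₀ T t).mulVec (zvec a x₀ i) := by
  funext k
  show (-(Matrix.kroneckerMap (· * ·) (Lmat a) _).mulVec x₀) (i, k) = _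
  simp only [Pi.neg_apply, neg_inj]
  show ((Matrix.kroneckerMap (· * ·) (Lmat a) (MmatD A B C t₀ T t)).mulVec x₀) (i, k) =
    (MmatD A B C t₀ T t).mulVec (zvec a x₀ i) k
  simp only [Matrix.mulVec, dotProduct, Fintype.sum_prod_type,
    Matrix.kroneckerMap_apply, zvec, Finset.mul_sum]
  rw [Finset.sum_comm]
  exact Finset.sum_congr rfl fun l _ => Finset.sum_congr rfl fun j _ => by ring

lemma cont_ustar_comp (i : Fin N) :
    Continuous fun t => (fun k => ustar A B C a x₀ t₀ T t (i, k)) := by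
  have : (fun t => (fun k => ustar A B C a x₀ t₀ T t (i, k))) =
      fun t => -(MmatD A B C t₀ T t).mulVec (zvec a x₀ i) := funext fun t => ustar_comp A B C a x₀ t₀ T i t
  rw [this]
  exact ((cont_M A B C t₀ T).matrix_mulVec continuous_const).neg

lemma terminal (hle : t₀ ≤ T) {u : ℝ → Fin N × Fin m → ℝ} (i : Fin N)
    (hu : IntegrableOn (fun s => (fun k => u s (i, k))) (Set.Ioc t₀ T) volume) :
    C.mulVec (traj A B u x₀ t₀ i T) =
      (C * NormedSpace.exp ((T - t₀) • A)).mulVec (fun k => x₀ (i, k)) +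
        ∫ s in t₀..T, (GmatD A B C T s).mulVec (fun k => u s (i, k)) := by
  unfold traj
  rw [Matrix.mulVec_add, Matrix.mulVec_mulVec]
  congr 1
  have hInt : IntervalIntegrable
      (fun s => (NormedSpace.exp ((T - s) • A) * B).mulVec (fun k => u s (i, k)))
      volume t₀ T :=
    intervalIntegrable_mulVec hle ((exp_cont_aux A T).matrix_mul continuous_const) hu
  rw [← integral_const_mulVec hInt C]
  refine intervalIntegral.integral_congr fun s _ => ?_
  rw [Matrix.mulVec_mulVec, GmatD, ← Matrix.mul_assoc]

lemma integral_G_ustar (hle : t₀ ≤ T) (hW : IsUnit (gramianW A B C t₀ T)) (i : Fin N) :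
    ∫ s in t₀..T, (GmatD A B C T s).mulVec (fun k => ustar A B C a x₀ t₀ T s (i, k)) =
      -(C * NormedSpace.exp ((T - t₀) • A)).mulVec (zvec a x₀ i) := by
  set W := gramianW A B C t₀ T with hWdef
  set K : Matrix (Fin p) (Fin n) ℝ := W⁻¹ * (C * NormedSpace.exp ((T - t₀) • A)) with hK
  have Hcont : Continuous fun s => C * NormedSpace.exp ((T - s) • A) * B * Bᵀ *
      NormedSpace.exp ((T - s) • Aᵀ) * Cᵀ :=
    (((((continuous_const.matrix_mul (exp_cont_aux A T)).matrix_mul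
      continuous_const).matrix_mul continuous_const).matrix_mul
      (exp_cont_aux Aᵀ T)).matrix_mul continuous_const)
  have step1 : ∀ s : ℝ, (GmatD A B C T s).mulVec (fun k => ustar A B C a x₀ t₀ T s (i, k)) =
      -(((C * NormedSpace.exp ((T - s) • A) * B * Bᵀ *
          NormedSpace.exp ((T - s) • Aᵀ) * Cᵀ) * K).mulVec (zvec a x₀ i)) := by
    intro s
    rw [ustar_comp, Matrix.mulVec_neg, Matrix.mulVec_mulVec]
    congr 2
    simp only [GmatD, MmatD, hK, Matrix.mul_assoc, ← hWdef]
  simp only [step1]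
  rw [intervalIntegral.integral_neg]
  have hHK : IntervalIntegrable (fun s => (C * NormedSpace.exp ((T - s) • A) * B * Bᵀ *
      NormedSpace.exp ((T - s) • Aᵀ) * Cᵀ) * K) volume t₀ T :=
    (Hcont.matrix_mul continuous_const).intervalIntegrable t₀ T
  have hH : IntervalIntegrable (fun s => C * NormedSpace.exp ((T - s) • A) * B * Bᵀ *
      NormedSpace.exp ((T - s) • Aᵀ) * Cᵀ) volume t₀ T :=
    Hcont.intervalIntegrable t₀ T
  rw [integral_mulVec_const hHK, integral_mul_const hH]
  have : (∫ s in t₀..T, C * NormedSpace.exp ((T - s) • A) * B * Bᵀ *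
      NormedSpace.exp ((T - s) • Aᵀ) * Cᵀ) = W := rfl
  rw [this, hK, ← Matrix.mul_assoc,
    Matrix.mul_nonsing_inv _ ((Matrix.isUnit_iff_isUnit_det _).mp hW), Matrix.one_mul]

lemma consensus_value (hle : t₀ ≤ T) (hW : IsUnit (gramianW A B C t₀ T)) (i : Fin N) :
    C.mulVec (traj A B (ustar A B C a x₀ t₀ T) x₀ t₀ i T) =
      (C * NormedSpace.exp ((T - t₀) • A)).mulVec
        (fun k => (∑ j, a j)⁻¹ * ∑ j, a j * x₀ (j, k)) := by
  have hu : IntegrableOn (fun s => (fun k => ustar A B C a x₀ t₀ T s (i, k)))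
      (Set.Ioc t₀ T) volume :=
    (cont_ustar_comp A B C a x₀ t₀ T i).integrableOn_Ioc
  rw [terminal A B C x₀ t₀ T hle i hu, integral_G_ustar A B C a x₀ t₀ T hle hW i,
    ← sub_eq_add_neg, ← Matrix.mulVec_sub, x0_sub_zvec]

lemma MT_eq (t : ℝ) :
    (MmatD A B C t₀ T t)ᵀ =
      ((NormedSpace.exp ((T - t₀) • A))ᵀ * Cᵀ * ((gramianW A B C t₀ T)⁻¹)ᵀ) *
        GmatD A B C T t := by
  have he : NormedSpace.exp ((T - t) • Aᵀ) = (NormedSpace.exp ((T - t) • A))ᵀ := by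
    rw [← Matrix.transpose_smul, Matrix.exp_transpose]
  unfold MmatD GmatD
  rw [he]
  simp [Matrix.transpose_mul, Matrix.transpose_transpose, Matrix.mul_assoc]

/-- projection to the `i`-th agent block, as a CLM. -/
noncomputable def projVecCLM (i : Fin N) : (Fin N × Fin m → ℝ) →L[ℝ] (Fin m → ℝ) :=
  LinearMap.toContinuousLinearMap (LinearMap.pi fun k => LinearMap.proj (R := ℝ) (i, k))

lemma memLp_comp_vec {μ : Measure ℝ} (i : Fin N) {u : ℝ → Fin N × Fin m → ℝ}
    (hu : MemLp u 2 μ) : MemLp (fun t => (fun k => u t (i, k))) 2 μ :=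
  (projVecCLM (m := m) i).comp_memLp' hu

lemma memLp_comp_scalar {μ : Measure ℝ} (ik : Fin N × Fin m) {u : ℝ → Fin N × Fin m → ℝ}
    (hu : MemLp u 2 μ) : MemLp (fun t => u t ik) 2 μ := by
  have h := (ContinuousLinearMap.proj (R := ℝ) (φ := fun _ : Fin N × Fin m => ℝ)
    ik).comp_memLp' hu
  exact h

lemma memLp_of_continuous {E : Type*} [NormedAddCommGroup E] {f : ℝ → E} (hf : Continuous f) :
    MemLp f 2 (volume.restrict (Set.Ioc t₀ T)) := by
  obtain ⟨K, hK⟩ := (isCompact_Icc (a := t₀) (b := T)).exists_bound_of_continuousOn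
    hf.continuousOn
  refine MemLp.mono_exponent (q := ⊤) ?_ le_top
  refine memLp_top_of_bound hf.aestronglyMeasurable.restrict K ?_
  filter_upwards [ae_restrict_mem measurableSet_Ioc] with s hs
  exact hK s (Set.Ioc_subset_Icc_self hs)

lemma integrable_mul_of_memLp {α : Type*} [MeasurableSpace α] {μ : Measure α} {f g : α → ℝ}
    (hf : MemLp f 2 μ) (hg : MemLp g 2 μ) : Integrable (fun x => f x * g x) μ := by
  have h : (fun x => f x * g x) = fun x => (((f x + g x) ^ 2 - f x ^ 2) - g x ^ 2) / 2 := by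
    funext x; ring
  rw [h]
  exact (((hf.add hg).integrable_sq.sub hf.integrable_sq).sub hg.integrable_sq).div_const 2

lemma sum_dot {q : ℕ} {ι : Type*} (s : Finset ι) (f : ι → Fin q → ℝ) (w : Fin q → ℝ) :
    (∑ i ∈ s, f i) ⬝ᵥ w = ∑ i ∈ s, f i ⬝ᵥ w := by
  simp only [dotProduct, Finset.sum_apply, Finset.sum_mul]
  exact Finset.sum_comm

lemma mulVec_dot {q r : ℕ} (M : Matrix (Fin q) (Fin r) ℝ) (z : Fin r → ℝ) (v : Fin q → ℝ) :
    (M.mulVec z) ⬝ᵥ v = z ⬝ᵥ (Mᵀ.mulVec v) := by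
  rw [Matrix.dotProduct_mulVec, Matrix.vecMul_transpose, dotProduct_comm]

end main
end ConsensusAux


/-- If the output controllability Gramian `W(t₀,T)` is invertible, then the
open-loop control `u*` drives all agents to output consensus at time `T`, and among all `L²`
controls achieving output consensus at time `T` it minimizes the weighted energy
`∫_{t₀}^T ∑ᵢ aᵢ ‖uᵢ(t)‖² dt`. -/
theorem optimal_finite_time_output_consensus {n m p N : ℕ}
    (A : Matrix (Fin n) (Fin n) ℝ) (B : Matrix (Fin n) (Fin m) ℝ)
    (C : Matrix (Fin p) (Fin n) ℝ) (hC : C.rank = p)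
    (a : Fin N → ℝ) (ha : ∀ i, 0 < a i)
    (t₀ T : ℝ) (ht : t₀ < T)
    (hW : IsUnit (gramianW A B C t₀ T))
    (x₀ : Fin N × Fin n → ℝ) :
    (∀ i j : Fin N,
      C.mulVec (traj A B (ustar A B C a x₀ t₀ T) x₀ t₀ i T) =
        C.mulVec (traj A B (ustar A B C a x₀ t₀ T) x₀ t₀ j T)) ∧
    ∀ u : ℝ → Fin N × Fin m → ℝ,
      MemLp u 2 (volume.restrict (Set.Ioc t₀ T)) →
      (∀ i j : Fin N,
        C.mulVec (traj A B u x₀ t₀ i T) = C.mulVec (traj A B u x₀ t₀ j T)) →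
      ∫ t in t₀..T, ∑ i, a i * ∑ k, (u t (i, k)) ^ 2 ≥
        ∫ t in t₀..T, ∑ i, a i * ∑ k, (ustar A B C a x₀ t₀ T t (i, k)) ^ 2 := by
  have hle : t₀ ≤ T := ht.le
  have hconsw : ∀ i j : Fin N,
      C.mulVec (traj A B (ustar A B C a x₀ t₀ T) x₀ t₀ i T) =
        C.mulVec (traj A B (ustar A B C a x₀ t₀ T) x₀ t₀ j T) := fun i j => by
    rw [ConsensusAux.consensus_value A B C a x₀ t₀ T hle hW i,
      ConsensusAux.consensus_value A B C a x₀ t₀ T hle hW j]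
  refine ⟨hconsw, ?_⟩
  intro u hu2 hcons
  rcases isEmpty_or_nonempty (Fin N) with hN | hN
  · simp [Finset.univ_eq_empty]
  -- abbreviations
  set G : ℝ → Matrix (Fin p) (Fin m) ℝ := ConsensusAux.GmatD A B C T with hG
  set vv : ℝ → Fin N × Fin m → ℝ :=
    fun t ik => u t ik - ustar A B C a x₀ t₀ T t ik with hvvdef
  set i₀ : Fin N := Classical.arbitrary (Fin N) with hi₀
  set d : Fin p → ℝ := C.mulVec (traj A B u x₀ t₀ i₀ T) -
      C.mulVec (traj A B (ustar A B C a x₀ t₀ T) x₀ t₀ i₀ T) with hd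
  set Pm : Matrix (Fin n) (Fin p) ℝ :=
    (NormedSpace.exp ((T - t₀) • A))ᵀ * Cᵀ * ((gramianW A B C t₀ T)⁻¹)ᵀ with hPm
  -- continuity and MemLp facts
  have hw_cont : ∀ ik : Fin N × Fin m,
      Continuous fun t => ustar A B C a x₀ t₀ T t ik := by
    rintro ⟨i, k⟩
    exact (continuous_apply k).comp (ConsensusAux.cont_ustar_comp A B C a x₀ t₀ T i)
  have hwmem : ∀ ik : Fin N × Fin m,
      MemLp (fun t => ustar A B C a x₀ t₀ T t ik) 2 (volume.restrict (Set.Ioc t₀ T)) :=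
    fun ik => ConsensusAux.memLp_of_continuous t₀ T (hw_cont ik)
  have humem : ∀ ik : Fin N × Fin m,
      MemLp (fun t => u t ik) 2 (volume.restrict (Set.Ioc t₀ T)) :=
    fun ik => ConsensusAux.memLp_comp_scalar ik hu2
  have hvmem : ∀ ik : Fin N × Fin m,
      MemLp (fun t => vv t ik) 2 (volume.restrict (Set.Ioc t₀ T)) :=
    fun ik => (humem ik).sub (hwmem ik)
  have hwfull : MemLp (ustar A B C a x₀ t₀ T) 2 (volume.restrict (Set.Ioc t₀ T)) :=
    ConsensusAux.memLp_of_continuous t₀ T (continuous_pi fun ik => hw_cont ik)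
  have hvfull : MemLp vv 2 (volume.restrict (Set.Ioc t₀ T)) := hu2.sub hwfull
  have hvi_int : ∀ i : Fin N,
      IntegrableOn (fun t => (fun k => vv t (i, k))) (Set.Ioc t₀ T) volume :=
    fun i => (ConsensusAux.memLp_comp_vec i hvfull).integrable one_le_two
  have hui_int : ∀ i : Fin N,
      IntegrableOn (fun t => (fun k => u t (i, k))) (Set.Ioc t₀ T) volume :=
    fun i => (ConsensusAux.memLp_comp_vec i hu2).integrable one_le_two
  have hwi_int : ∀ i : Fin N,
      IntegrableOn (fun t => (fun k => ustar A B C a x₀ t₀ T t (i, k)))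
        (Set.Ioc t₀ T) volume :=
    fun i => (ConsensusAux.cont_ustar_comp A B C a x₀ t₀ T i).integrableOn_Ioc
  have hGv_int : ∀ i : Fin N,
      IntervalIntegrable (fun t => (G t).mulVec (fun k => vv t (i, k))) volume t₀ T :=
    fun i => ConsensusAux.intervalIntegrable_mulVec hle (ConsensusAux.cont_G A B C T)
      (hvi_int i)
  have hGu_int : ∀ i : Fin N,
      IntervalIntegrable (fun t => (G t).mulVec (fun k => u t (i, k))) volume t₀ T :=
    fun i => ConsensusAux.intervalIntegrable_mulVec hle (ConsensusAux.cont_G A B C T)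
      (hui_int i)
  have hGw_int : ∀ i : Fin N,
      IntervalIntegrable (fun t => (G t).mulVec (fun k => ustar A B C a x₀ t₀ T t (i, k)))
        volume t₀ T :=
    fun i => ConsensusAux.intervalIntegrable_mulVec hle (ConsensusAux.cont_G A B C T)
      (hwi_int i)
  -- the common terminal defect
  have hdi : ∀ i : Fin N,
      (∫ t in t₀..T, (G t).mulVec (fun k => vv t (i, k))) = d := by
    intro i
    have h1 : ∀ t : ℝ, (G t).mulVec (fun k => vv t (i, k)) =
        (G t).mulVec (fun k => u t (i, k)) -
          (G t).mulVec (fun k => ustar A B C a x₀ t₀ T t (i, k)) := by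
      intro t
      rw [← Matrix.mulVec_sub]
      rfl
    rw [intervalIntegral.integral_congr (fun t _ => h1 t),
      intervalIntegral.integral_sub (hGu_int i) (hGw_int i)]
    have t1 := ConsensusAux.terminal A B C x₀ t₀ T hle i (hui_int i)
    have t2 := ConsensusAux.terminal A B C x₀ t₀ T hle i (hwi_int i)
    have e1 : ∫ t in t₀..T, (G t).mulVec (fun k => u t (i, k)) =
        C.mulVec (traj A B u x₀ t₀ i T) -
          (C * NormedSpace.exp ((T - t₀) • A)).mulVec (fun k => x₀ (i, k)) := by
      rw [t1]; abel
    have e2 : ∫ t in t₀..T, (G t).mulVec (fun k => ustar A B C a x₀ t₀ T t (i, k)) =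
        C.mulVec (traj A B (ustar A B C a x₀ t₀ T) x₀ t₀ i T) -
          (C * NormedSpace.exp ((T - t₀) • A)).mulVec (fun k => x₀ (i, k)) := by
      rw [t2]; abel
    rw [e1, e2, hcons i i₀, hconsw i i₀, hd]
    abel
  -- value of the cross integrals
  have hcval : ∀ i : Fin N,
      (∫ t in t₀..T, ∑ k, ustar A B C a x₀ t₀ T t (i, k) * vv t (i, k)) =
        -(ConsensusAux.zvec a x₀ i ⬝ᵥ Pm.mulVec d) := by
    intro i
    have hpt2 : ∀ t : ℝ, (∑ k, ustar A B C a x₀ t₀ T t (i, k) * vv t (i, k)) =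
        -(ConsensusAux.zvec a x₀ i ⬝ᵥ
            (Pm * G t).mulVec (fun k => vv t (i, k))) := by
      intro t
      have h1 := ConsensusAux.ustar_comp A B C a x₀ t₀ T i t
      calc (∑ k, ustar A B C a x₀ t₀ T t (i, k) * vv t (i, k))
          = (fun k => ustar A B C a x₀ t₀ T t (i, k)) ⬝ᵥ (fun k => vv t (i, k)) := rfl
        _ = (-(ConsensusAux.MmatD A B C t₀ T t).mulVec (ConsensusAux.zvec a x₀ i)) ⬝ᵥ
              (fun k => vv t (i, k)) := by rw [h1]
        _ = -(((ConsensusAux.MmatD A B C t₀ T t).mulVec (ConsensusAux.zvec a x₀ i)) ⬝ᵥ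
              (fun k => vv t (i, k))) := neg_dotProduct _ _
        _ = -(ConsensusAux.zvec a x₀ i ⬝ᵥ
              ((ConsensusAux.MmatD A B C t₀ T t)ᵀ.mulVec (fun k => vv t (i, k)))) := by
            rw [ConsensusAux.mulVec_dot]
        _ = -(ConsensusAux.zvec a x₀ i ⬝ᵥ
              (Pm * G t).mulVec (fun k => vv t (i, k))) := by
            rw [ConsensusAux.MT_eq A B C t₀ T t]
    have hPGv : IntervalIntegrable
        (fun t => (Pm * G t).mulVec (fun k => vv t (i, k))) volume t₀ T :=
      ConsensusAux.intervalIntegrable_mulVec hle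
        (continuous_const.matrix_mul (ConsensusAux.cont_G A B C T)) (hvi_int i)
    rw [intervalIntegral.integral_congr (fun t _ => hpt2 t), intervalIntegral.integral_neg,
      ConsensusAux.integral_dot hPGv]
    have h3 : ∀ t : ℝ, (Pm * G t).mulVec (fun k => vv t (i, k)) =
        Pm.mulVec ((G t).mulVec (fun k => vv t (i, k))) := fun t =>
      (Matrix.mulVec_mulVec _ _ _).symm
    rw [intervalIntegral.integral_congr (fun t _ => h3 t),
      ConsensusAux.integral_const_mulVec (hGv_int i) Pm, hdi i]
  -- pointwise energy expansion
  have hpt : ∀ t : ℝ, (∑ i, a i * ∑ k, (u t (i, k)) ^ 2) =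
      (∑ i, a i * ∑ k, (ustar A B C a x₀ t₀ T t (i, k)) ^ 2) +
        ((∑ i, a i * (2 * ∑ k, ustar A B C a x₀ t₀ T t (i, k) * vv t (i, k))) +
          (∑ i, a i * ∑ k, (vv t (i, k)) ^ 2)) := by
    intro t
    rw [← Finset.sum_add_distrib, ← Finset.sum_add_distrib]
    refine Finset.sum_congr rfl fun i _ => ?_
    have hsum : (∑ k, (u t (i, k)) ^ 2) =
        (∑ k, (ustar A B C a x₀ t₀ T t (i, k)) ^ 2) +
          ((2 * ∑ k, ustar A B C a x₀ t₀ T t (i, k) * vv t (i, k)) +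
            (∑ k, (vv t (i, k)) ^ 2)) := by
      rw [Finset.mul_sum, ← Finset.sum_add_distrib, ← Finset.sum_add_distrib]
      refine Finset.sum_congr rfl fun k _ => ?_
      have hx : u t (i, k) = ustar A B C a x₀ t₀ T t (i, k) + vv t (i, k) := by
        simp [hvvdef]
      rw [hx]; ring
    rw [hsum]; ring
  -- integrabilities for the splitting
  have hIU : IntervalIntegrable
      (fun t => ∑ i, a i * ∑ k, (ustar A B C a x₀ t₀ T t (i, k)) ^ 2) volume t₀ T :=
    (continuous_finset_sum _ fun i _ => continuous_const.mul
      (continuous_finset_sum _ fun k _ => (hw_cont (i, k)).pow 2)).intervalIntegrable t₀ T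
  have hIci : ∀ i : Fin N, IntervalIntegrable
      (fun t => a i * (2 * ∑ k, ustar A B C a x₀ t₀ T t (i, k) * vv t (i, k)))
      volume t₀ T := by
    intro i
    rw [intervalIntegrable_iff_integrableOn_Ioc_of_le hle]
    exact (((integrable_finset_sum _ fun k _ =>
      ConsensusAux.integrable_mul_of_memLp (hwmem (i, k)) (hvmem (i, k))).const_mul
        2).const_mul (a i))
  have hIc : IntervalIntegrable
      (fun t => ∑ i, a i * (2 * ∑ k, ustar A B C a x₀ t₀ T t (i, k) * vv t (i, k)))
      volume t₀ T := by
    rw [intervalIntegrable_iff_integrableOn_Ioc_of_le hle]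
    refine integrable_finset_sum _ fun i _ => ?_
    have := hIci i
    rwa [intervalIntegrable_iff_integrableOn_Ioc_of_le hle] at this
  have hIq : IntervalIntegrable
      (fun t => ∑ i, a i * ∑ k, (vv t (i, k)) ^ 2) volume t₀ T := by
    rw [intervalIntegrable_iff_integrableOn_Ioc_of_le hle]
    exact integrable_finset_sum _ fun i _ =>
      (integrable_finset_sum _ fun k _ => (hvmem (i, k)).integrable_sq).const_mul (a i)
  -- split the integral
  have EQ : (∫ t in t₀..T, ∑ i, a i * ∑ k, (u t (i, k)) ^ 2) =
      (∫ t in t₀..T, ∑ i, a i * ∑ k, (ustar A B C a x₀ t₀ T t (i, k)) ^ 2) +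
        ((∫ t in t₀..T,
            ∑ i, a i * (2 * ∑ k, ustar A B C a x₀ t₀ T t (i, k) * vv t (i, k))) +
          (∫ t in t₀..T, ∑ i, a i * ∑ k, (vv t (i, k)) ^ 2)) := by
    rw [intervalIntegral.integral_congr (fun t _ => hpt t),
      intervalIntegral.integral_add hIU (hIc.add hIq),
      intervalIntegral.integral_add hIc hIq]
  -- cross term vanishes
  have hc0 : (∫ t in t₀..T,
      ∑ i, a i * (2 * ∑ k, ustar A B C a x₀ t₀ T t (i, k) * vv t (i, k))) = 0 := by
    rw [intervalIntegral.integral_finset_sum (fun i _ => hIci i)]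
    have : ∀ i : Fin N,
        (∫ t in t₀..T, a i * (2 * ∑ k, ustar A B C a x₀ t₀ T t (i, k) * vv t (i, k))) =
          a i * (2 * -(ConsensusAux.zvec a x₀ i ⬝ᵥ Pm.mulVec d)) := by
      intro i
      rw [intervalIntegral.integral_const_mul, intervalIntegral.integral_const_mul, hcval i]
    rw [Finset.sum_congr rfl fun i _ => this i]
    have h4 : ∀ i : Fin N, a i * (2 * -(ConsensusAux.zvec a x₀ i ⬝ᵥ Pm.mulVec d)) =
        (-2 : ℝ) * ((a i • ConsensusAux.zvec a x₀ i) ⬝ᵥ Pm.mulVec d) := by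
      intro i
      rw [smul_dotProduct]
      simp only [smul_eq_mul]
      ring
    rw [Finset.sum_congr rfl fun i _ => h4 i, ← Finset.mul_sum,
      ← ConsensusAux.sum_dot, ConsensusAux.sum_smul_zvec a x₀ ha,
      zero_dotProduct, mul_zero]
  have hq0 : 0 ≤ ∫ t in t₀..T, ∑ i, a i * ∑ k, (vv t (i, k)) ^ 2 := by
    refine intervalIntegral.integral_nonneg hle fun s _ => ?_
    refine Finset.sum_nonneg fun i _ => ?_
    exact mul_nonneg (ha i).le (Finset.sum_nonneg fun k _ => sq_nonneg _)
  rw [ge_iff_le, EQ, hc0]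
  linarith
end

section
/- Fix t_0 < T < ∞ and assume W(t,T) is invertible for every t ∈ [t_0, T). Let u*(t) = −(L(a) ⊗ (B^T e^{A^T(T−t)} C^T W(t_0,T)^{-1} C e^{A(T−t_0)})) x_0 be the optimal open-loop control and let x*(t) = (x_1^*(t),…,x_N^*(t)) be the corresponding trajectory given by x_i^*(t) = e^{A(t−t_0)} x_i(t_0) + ∫_{t_0}^t e^{A(t−s)} B u_i^*(s) ds. Then for every t ∈ [t_0, T), u*(t) = −(L(a) ⊗ (B^T e^{A^T(T−t)} C^T W(t,T)^{-1} C e^{A(T−t)})) x*(t); that is, the optimal open-loop control is realized by the time-varying state feedback u(x,t) = −(L(a) ⊗ B^T e^{A^T(T−t)} C^T W(t,T)^{-1} C e^{A(T−t)}) x. -/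
open Matrix MeasureTheory

attribute [local instance] Matrix.normedAddCommGroup Matrix.normedSpace

open scoped Kronecker

section Aux

lemma expsmul_mul {n : ℕ} (A : Matrix (Fin n) (Fin n) ℝ) (b c : ℝ) :
    NormedSpace.exp (b • A) * NormedSpace.exp (c • A) = NormedSpace.exp ((b + c) • A) := by
  rw [add_smul]
  exact (Matrix.exp_add_of_commute _ _
    (((Commute.refl A).smul_left b).smul_right c)).symm

lemma cont_expsmul {n : ℕ} (A : Matrix (Fin n) (Fin n) ℝ) (f : ℝ → ℝ) (hf : Continuous f) :
    Continuous fun s : ℝ => NormedSpace.exp (f s • A) := by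
  letI : SeminormedRing (Matrix (Fin n) (Fin n) ℝ) := Matrix.linftyOpSemiNormedRing
  letI : NormedRing (Matrix (Fin n) (Fin n) ℝ) := Matrix.linftyOpNormedRing
  letI : NormedAlgebra ℝ (Matrix (Fin n) (Fin n) ℝ) := Matrix.linftyOpNormedAlgebra
  letI : NormedAlgebra ℚ (Matrix (Fin n) (Fin n) ℝ) := NormedAlgebra.restrictScalars ℚ ℝ _
  exact (@NormedSpace.exp_continuous (Matrix (Fin n) (Fin n) ℝ) _ _
    (FiniteDimensional.complete ℝ _)).comp (hf.smul continuous_const)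

variable {a b c d N' : Type*} [Fintype a] [Fintype b] [Fintype c] [Fintype d] [Fintype N']

/-- left-multiplication as a linear map -/
noncomputable def mulLeftLM (X : Matrix a b ℝ) :
    Matrix b c ℝ →ₗ[ℝ] Matrix a c ℝ where
  toFun M := X * M
  map_add' M₁ M₂ := Matrix.mul_add X M₁ M₂
  map_smul' r M := Matrix.mul_smul X r M

/-- right-multiplication as a linear map -/
noncomputable def mulRightLM (X : Matrix b c ℝ) :
    Matrix a b ℝ →ₗ[ℝ] Matrix a c ℝ where
  toFun M := M * X
  map_add' M₁ M₂ := Matrix.add_mul M₁ M₂ X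
  map_smul' r M := Matrix.smul_mul r M X

/-- mulVec by a fixed vector as a linear map in the matrix -/
noncomputable def mulVecLM (v : b → ℝ) :
    Matrix a b ℝ →ₗ[ℝ] (a → ℝ) where
  toFun M := M.mulVec v
  map_add' M₁ M₂ := Matrix.add_mulVec M₁ M₂ v
  map_smul' r M := Matrix.smul_mulVec r M v

/-- Kronecker with fixed left factor, as a linear map -/
noncomputable def kronLM (L : Matrix a b ℝ) :
    Matrix c d ℝ →ₗ[ℝ] Matrix (a × c) (b × d) ℝ where
  toFun M := L ⊗ₖ M
  map_add' M₁ M₂ := by ext ⟨i, k⟩ ⟨j, l⟩; simp [Matrix.kroneckerMap_apply, mul_add]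
  map_smul' r M := by ext ⟨i, k⟩ ⟨j, l⟩; simp [Matrix.kroneckerMap_apply]; ring

/-- block-row extraction as a linear map -/
noncomputable def subLM (i : N') :
    Matrix (N' × a) b ℝ →ₗ[ℝ] Matrix a b ℝ where
  toFun M := M.submatrix (fun k : a => (i, k)) id
  map_add' M₁ M₂ := rfl
  map_smul' r M := rfl

lemma lm_intervalIntegral {E F : Type*} [NormedAddCommGroup E] [NormedSpace ℝ E]
    [FiniteDimensional ℝ E] [NormedAddCommGroup F] [NormedSpace ℝ F] [CompleteSpace F]
    (f : E →ₗ[ℝ] F) {g : ℝ → E} {u v : ℝ} (hg : IntervalIntegrable g volume u v) :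
    (∫ s in u..v, f (g s)) = f (∫ s in u..v, g s) :=
  (LinearMap.toContinuousLinearMap f).intervalIntegral_comp_comm hg

lemma mul_sub_kron (L : Matrix N' N' ℝ) (X : Matrix a b ℝ) (M : Matrix b c ℝ) (i : N') :
    X * ((L ⊗ₖ M).submatrix (fun k : b => (i, k)) id) =
      (L ⊗ₖ (X * M)).submatrix (fun k : a => (i, k)) id := by
  ext k jq
  obtain ⟨j, q⟩ := jq
  simp only [Matrix.mul_apply, Matrix.submatrix_apply, Matrix.kroneckerMap_apply, id_eq,
    Finset.mul_sum]
  exact Finset.sum_congr rfl fun k' _ => by ring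

lemma kron_sub_right (L : Matrix N' N' ℝ) (X Y : Matrix a b ℝ) :
    L ⊗ₖ (X - Y) = L ⊗ₖ X - L ⊗ₖ Y := by
  ext ⟨i, k⟩ ⟨j, l⟩
  simp [Matrix.kroneckerMap_apply, mul_sub]

lemma kron_one_mulVec [DecidableEq N'] (M : Matrix a b ℝ) (x : N' × b → ℝ) (i : N') (k : a) :
    (((1 : Matrix N' N' ℝ) ⊗ₖ M).mulVec x) (i, k) = M.mulVec (fun l => x (i, l)) k := by
  simp [Matrix.mulVec, dotProduct, Fintype.sum_prod_type, Matrix.one_apply, ite_mul, zero_mul,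
    Finset.sum_ite_eq, Finset.sum_ite_eq']

lemma Lmat_mul_self {N : ℕ} (a : Fin N → ℝ) (ha : ∀ i, 0 < a i) :
    Lmat a * Lmat a = Lmat a := by
  ext i j
  have hs : (∑ k, a k) ≠ 0 :=
    ne_of_gt (Finset.sum_pos (fun j _ => ha j) ⟨i, Finset.mem_univ i⟩)
  simp only [Lmat, Matrix.mul_apply, Matrix.sub_apply, Matrix.one_apply, Matrix.smul_apply,
    Matrix.vecMulVec_apply, smul_eq_mul, one_mul]
  have expand : ∀ k ∈ Finset.univ, ((if i = k then (1:ℝ) else 0) - (∑ l, a l)⁻¹ * a k) *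
      ((if k = j then (1:ℝ) else 0) - (∑ l, a l)⁻¹ * a j) =
      ((if i = k then (1:ℝ) else 0) * (if k = j then (1:ℝ) else 0)
      - (if i = k then (1:ℝ) else 0) * ((∑ l, a l)⁻¹ * a j)
      - (if k = j then (1:ℝ) else 0) * ((∑ l, a l)⁻¹ * a k))
      + ((∑ l, a l)⁻¹ * ((∑ l, a l)⁻¹ * a j)) * a k := fun k _ => by ring
  rw [Finset.sum_congr rfl expand]
  rw [Finset.sum_add_distrib, Finset.sum_sub_distrib, Finset.sum_sub_distrib, ← Finset.mul_sum]
  simp only [ite_mul, one_mul, zero_mul, Finset.sum_ite_eq, Finset.sum_ite_eq',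
    Finset.mem_univ, if_true]
  rw [mul_comm ((∑ l, a l)⁻¹) (a j)]
  field_simp
  ring

end Aux

/-- The optimal open-loop control coincides, along its own trajectory `x*`,
with the time-varying state feedback
`u(x,t) = −(L(a) ⊗ Bᵀ e^{Aᵀ(T−t)} Cᵀ W(t,T)⁻¹ C e^{A(T−t)}) x` for every `t ∈ [t₀, T)`. -/
theorem optimal_control_as_state_feedback {n m p N : ℕ}
    (A : Matrix (Fin n) (Fin n) ℝ) (B : Matrix (Fin n) (Fin m) ℝ)
    (C : Matrix (Fin p) (Fin n) ℝ) (hC : C.rank = p)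
    (a : Fin N → ℝ) (ha : ∀ i, 0 < a i)
    (t₀ T : ℝ) (ht : t₀ < T)
    (hW : ∀ t ∈ Set.Ico t₀ T, IsUnit (gramianW A B C t T))
    (x₀ : Fin N × Fin n → ℝ) :
    ∀ t ∈ Set.Ico t₀ T,
      ustar A B C a x₀ t₀ T t =
        -(Matrix.kroneckerMap (· * ·) (Lmat a)
            (Bᵀ * NormedSpace.exp ((T - t) • Aᵀ) * Cᵀ * (gramianW A B C t T)⁻¹ *
              C * NormedSpace.exp ((T - t) • A))).mulVec
          (fun ik => traj A B (ustar A B C a x₀ t₀ T) x₀ t₀ ik.1 t ik.2) := by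
  classical
  intro t htmem
  obtain ⟨ht₀t, htT⟩ := htmem
  have hW₀ : IsUnit (gramianW A B C t₀ T).det :=
    (Matrix.isUnit_iff_isUnit_det _).mp (hW t₀ ⟨le_refl _, ht⟩)
  have hWt : IsUnit (gramianW A B C t T).det :=
    (Matrix.isUnit_iff_isUnit_det _).mp (hW t ⟨ht₀t, htT⟩)
  have hcK : Continuous fun s : ℝ => C * NormedSpace.exp ((T - s) • A) * B * Bᵀ *
      NormedSpace.exp ((T - s) • Aᵀ) * Cᵀ :=
    ((((continuous_const.matrix_mul
        (cont_expsmul A _ (continuous_const.sub continuous_id))).matrix_mul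
      continuous_const).matrix_mul continuous_const).matrix_mul
      (cont_expsmul Aᵀ _ (continuous_const.sub continuous_id))).matrix_mul continuous_const
  have hcQ : Continuous fun s : ℝ => NormedSpace.exp ((t - s) • A) * B * Bᵀ *
      NormedSpace.exp ((T - s) • Aᵀ) * Cᵀ :=
    ((((cont_expsmul A _ (continuous_const.sub continuous_id)).matrix_mul
      continuous_const).matrix_mul continuous_const).matrix_mul
      (cont_expsmul Aᵀ _ (continuous_const.sub continuous_id))).matrix_mul continuous_const
  letI : ∀ q r : ℕ, ENormedAddMonoid (Matrix (Fin q) (Fin r) ℝ) := fun q r =>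
    NormedAddGroup.toENormedAddMonoid
  have hKint : ∀ u v : ℝ, IntervalIntegrable
      (fun s => C * NormedSpace.exp ((T - s) • A) * B * Bᵀ *
        NormedSpace.exp ((T - s) • Aᵀ) * Cᵀ) volume u v :=
    fun u v => hcK.intervalIntegrable u v
  have hQint : IntervalIntegrable
      (fun s => NormedSpace.exp ((t - s) • A) * B * Bᵀ *
        NormedSpace.exp ((T - s) • Aᵀ) * Cᵀ) volume t₀ t := hcQ.intervalIntegrable t₀ t
  set Mt : Matrix (Fin n) (Fin p) ℝ :=
    ∫ s in t₀..t, NormedSpace.exp ((t - s) • A) * B * Bᵀ *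
      NormedSpace.exp ((T - s) • Aᵀ) * Cᵀ with hMt
  set P : Matrix (Fin p) (Fin n) ℝ :=
    (gramianW A B C t₀ T)⁻¹ * C * NormedSpace.exp ((T - t₀) • A) with hPdef
  have hsplit : gramianW A B C t₀ T =
      (∫ s in t₀..t, C * NormedSpace.exp ((T - s) • A) * B * Bᵀ *
        NormedSpace.exp ((T - s) • Aᵀ) * Cᵀ) + gramianW A B C t T := by
    rw [gramianW, gramianW]
    exact (intervalIntegral.integral_add_adjacent_intervals (hKint t₀ t) (hKint t T)).symm
  have hEE : ∀ s : ℝ, C * NormedSpace.exp ((T - t) • A) *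
      (NormedSpace.exp ((t - s) • A) * B * Bᵀ *
        NormedSpace.exp ((T - s) • Aᵀ) * Cᵀ) =
      C * NormedSpace.exp ((T - s) • A) * B * Bᵀ *
        NormedSpace.exp ((T - s) • Aᵀ) * Cᵀ := by
    intro s
    have h2 : NormedSpace.exp ((T - t) • A) * NormedSpace.exp ((t - s) • A) =
        NormedSpace.exp ((T - s) • A) := by
      rw [expsmul_mul, show T - t + (t - s) = T - s by ring]
    simp only [← Matrix.mul_assoc]
    rw [Matrix.mul_assoc C, h2]
  have hpull : C * NormedSpace.exp ((T - t) • A) * Mt =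
      ∫ s in t₀..t, C * NormedSpace.exp ((T - s) • A) * B * Bᵀ *
        NormedSpace.exp ((T - s) • Aᵀ) * Cᵀ := by
    rw [hMt]
    have h1 := lm_intervalIntegral (mulLeftLM (c := Fin p)
      (C * NormedSpace.exp ((T - t) • A))) hQint
    simp only [mulLeftLM, LinearMap.coe_mk, AddHom.coe_mk] at h1
    rw [← h1]
    exact intervalIntegral.integral_congr fun s _ => hEE s
  have e1 : C * NormedSpace.exp ((T - t) • A) * Mt =
      gramianW A B C t₀ T - gramianW A B C t T := by
    rw [hpull, eq_sub_iff_add_eq]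
    exact hsplit.symm
  have hA' : NormedSpace.exp ((T - t) • A) * NormedSpace.exp ((t - t₀) • A) =
      NormedSpace.exp ((T - t₀) • A) := by
    rw [expsmul_mul, show T - t + (t - t₀) = T - t₀ by ring]
  have hW₀P : gramianW A B C t₀ T * P = C * NormedSpace.exp ((T - t₀) • A) := by
    rw [hPdef]
    calc gramianW A B C t₀ T *
        ((gramianW A B C t₀ T)⁻¹ * C * NormedSpace.exp ((T - t₀) • A))
        = gramianW A B C t₀ T * (gramianW A B C t₀ T)⁻¹ * C *
            NormedSpace.exp ((T - t₀) • A) := by simp only [Matrix.mul_assoc]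
      _ = C * NormedSpace.exp ((T - t₀) • A) := by
          rw [Matrix.mul_nonsing_inv _ hW₀, Matrix.one_mul]
  have hWtinv : (gramianW A B C t T)⁻¹ * gramianW A B C t T = 1 :=
    Matrix.nonsing_inv_mul _ hWt
  have hMtP : C * NormedSpace.exp ((T - t) • A) * (Mt * P) =
      C * NormedSpace.exp ((T - t₀) • A) - gramianW A B C t T * P := by
    calc C * NormedSpace.exp ((T - t) • A) * (Mt * P)
        = C * NormedSpace.exp ((T - t) • A) * Mt * P := by simp only [Matrix.mul_assoc]
      _ = (gramianW A B C t₀ T - gramianW A B C t T) * P := by rw [e1]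
      _ = gramianW A B C t₀ T * P - gramianW A B C t T * P := Matrix.sub_mul _ _ _
      _ = C * NormedSpace.exp ((T - t₀) • A) - gramianW A B C t T * P := by rw [hW₀P]
  have hkey :
      Bᵀ * NormedSpace.exp ((T - t) • Aᵀ) * Cᵀ * (gramianW A B C t T)⁻¹ * C *
          NormedSpace.exp ((T - t) • A) * NormedSpace.exp ((t - t₀) • A) -
        Bᵀ * NormedSpace.exp ((T - t) • Aᵀ) * Cᵀ * (gramianW A B C t T)⁻¹ * C *
          NormedSpace.exp ((T - t) • A) * (Mt * P) =
      Bᵀ * NormedSpace.exp ((T - t) • Aᵀ) * Cᵀ * (gramianW A B C t₀ T)⁻¹ * C *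
          NormedSpace.exp ((T - t₀) • A) := by
    rw [show Bᵀ * NormedSpace.exp ((T - t) • Aᵀ) * Cᵀ * (gramianW A B C t T)⁻¹ * C *
          NormedSpace.exp ((T - t) • A) * NormedSpace.exp ((t - t₀) • A)
        = Bᵀ * NormedSpace.exp ((T - t) • Aᵀ) * Cᵀ * (gramianW A B C t T)⁻¹ *
          (C * (NormedSpace.exp ((T - t) • A) * NormedSpace.exp ((t - t₀) • A))) by
          simp only [Matrix.mul_assoc]]
    rw [hA']
    rw [show Bᵀ * NormedSpace.exp ((T - t) • Aᵀ) * Cᵀ * (gramianW A B C t T)⁻¹ * C *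
          NormedSpace.exp ((T - t) • A) * (Mt * P)
        = Bᵀ * NormedSpace.exp ((T - t) • Aᵀ) * Cᵀ * (gramianW A B C t T)⁻¹ *
          (C * NormedSpace.exp ((T - t) • A) * (Mt * P)) by simp only [Matrix.mul_assoc]]
    rw [hMtP, Matrix.mul_sub, sub_sub_cancel]
    rw [show Bᵀ * NormedSpace.exp ((T - t) • Aᵀ) * Cᵀ * (gramianW A B C t T)⁻¹ *
          (gramianW A B C t T * P)
        = Bᵀ * (NormedSpace.exp ((T - t) • Aᵀ) * (Cᵀ *
            ((gramianW A B C t T)⁻¹ * gramianW A B C t T * P))) by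
          simp only [Matrix.mul_assoc]]
    rw [hWtinv, Matrix.one_mul, hPdef]
    simp only [Matrix.mul_assoc]
  -- the trajectory formula
  have htraj : ∀ i : Fin N, traj A B (ustar A B C a x₀ t₀ T) x₀ t₀ i t =
      (NormedSpace.exp ((t - t₀) • A)).mulVec (fun k => x₀ (i, k)) +
        -(((Lmat a ⊗ₖ (Mt * P)).submatrix (fun k : Fin n => (i, k)) id).mulVec x₀) := by
    intro i
    set Φ : Matrix (Fin n) (Fin p) ℝ →ₗ[ℝ] (Fin n → ℝ) :=
      (mulVecLM x₀).comp ((subLM i).comp ((kronLM (Lmat a)).comp (mulRightLM P))) with hΦdef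
    have hust : ∀ s : ℝ, (fun k => ustar A B C a x₀ t₀ T s (i, k)) =
        -(((Lmat a ⊗ₖ (Bᵀ * NormedSpace.exp ((T - s) • Aᵀ) * Cᵀ *
            (gramianW A B C t₀ T)⁻¹ * C * NormedSpace.exp ((T - t₀) • A))).submatrix
          (fun k : Fin m => (i, k)) id).mulVec x₀) := by
      intro s; funext k; rfl
    have hGQ : ∀ s : ℝ, (NormedSpace.exp ((t - s) • A) * B) *
        (Bᵀ * NormedSpace.exp ((T - s) • Aᵀ) * Cᵀ *
          (gramianW A B C t₀ T)⁻¹ * C * NormedSpace.exp ((T - t₀) • A)) =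
        (NormedSpace.exp ((t - s) • A) * B * Bᵀ *
          NormedSpace.exp ((T - s) • Aᵀ) * Cᵀ) * P := by
      intro s; rw [hPdef]; simp only [Matrix.mul_assoc]
    have hΦ : ∀ s : ℝ,
        (NormedSpace.exp ((t - s) • A) * B).mulVec
          (fun k => ustar A B C a x₀ t₀ T s (i, k)) =
        -(Φ (NormedSpace.exp ((t - s) • A) * B * Bᵀ *
            NormedSpace.exp ((T - s) • Aᵀ) * Cᵀ)) := by
      intro s
      rw [hust s, Matrix.mulVec_neg, Matrix.mulVec_mulVec, mul_sub_kron, hGQ s]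
      rfl
    show (NormedSpace.exp ((t - t₀) • A)).mulVec (fun k => x₀ (i, k)) +
        (∫ s in t₀..t, (NormedSpace.exp ((t - s) • A) * B).mulVec
          (fun k => ustar A B C a x₀ t₀ T s (i, k))) = _
    congr 1
    rw [intervalIntegral.integral_congr (g := fun s =>
      -(Φ (NormedSpace.exp ((t - s) • A) * B * Bᵀ *
          NormedSpace.exp ((T - s) • Aᵀ) * Cᵀ))) (fun s _ => hΦ s)]
    rw [intervalIntegral.integral_neg]
    rw [lm_intervalIntegral _ hQint, ← hMt]
    rfl
  have hxs : (fun ik : Fin N × Fin n => traj A B (ustar A B C a x₀ t₀ T) x₀ t₀ ik.1 t ik.2) =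
      ((1 : Matrix (Fin N) (Fin N) ℝ) ⊗ₖ NormedSpace.exp ((t - t₀) • A)).mulVec x₀ -
        (Lmat a ⊗ₖ (Mt * P)).mulVec x₀ := by
    funext ik
    obtain ⟨i, l⟩ := ik
    have h0 := congrFun (htraj i) l
    rw [h0, Pi.sub_apply, kron_one_mulVec, Pi.add_apply, Pi.neg_apply, sub_eq_add_neg]
    rfl
  rw [hxs, Matrix.mulVec_sub, Matrix.mulVec_mulVec, Matrix.mulVec_mulVec,
    ← Matrix.mul_kronecker_mul, ← Matrix.mul_kronecker_mul, Matrix.mul_one,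
    Lmat_mul_self a ha, ← Matrix.sub_mulVec, ← kron_sub_right, hkey]
  rfl
end

section
/- Assume C ∈ ℝ^{p×n} has full row rank, ker C is A-invariant (A v ∈ ker C whenever C v = 0), and W(t,T) is invertible for some t < T. Then G(t,T) is invertible and e^{A^T(T−t)} C^T W(t,T)^{-1} C e^{A(T−t)} = C^T G(t,T)^{-1} C. Consequently, for any x ∈ ℝ^{nN} with stacked outputs y = (I_N ⊗ C) x, −(L(a) ⊗ (B^T e^{A^T(T−t)} C^T W(t,T)^{-1} C e^{A(T−t)})) x = −(L(a) ⊗ (B^T C^T G(t,T)^{-1})) y. -/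
open Matrix MeasureTheory

attribute [local instance] Matrix.normedAddCommGroup Matrix.normedSpace

/-- `G(t,T) = ∫_0^{T−t} C e^{−A r} B Bᵀ e^{−Aᵀ r} Cᵀ dr`. -/
noncomputable def gramianG {n m p : ℕ} (A : Matrix (Fin n) (Fin n) ℝ)
    (B : Matrix (Fin n) (Fin m) ℝ) (C : Matrix (Fin p) (Fin n) ℝ) (t T : ℝ) :
    Matrix (Fin p) (Fin p) ℝ :=
  ∫ r in (0:ℝ)..(T - t), C * NormedSpace.exp ((-r) • A) * B * Bᵀ *
      NormedSpace.exp ((-r) • Aᵀ) * Cᵀ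

section MyAux

open NormedSpace

variable {n p : ℕ}

private lemma exists_right_inverse_of_rank (C : Matrix (Fin p) (Fin n) ℝ) (hC : C.rank = p) :
    ∃ D : Matrix (Fin n) (Fin p) ℝ, C * D = 1 := by
  rw [← Matrix.mulVec_surjective_iff_exists_right_inverse]
  have hsurj : Function.Surjective C.mulVecLin := by
    rw [← LinearMap.range_eq_top]
    apply Submodule.eq_top_of_finrank_eq
    rw [← Matrix.rank, hC]
    simp
  exact hsurj

private lemma exp_smul_continuous (A : Matrix (Fin n) (Fin n) ℝ) :
    Continuous fun r : ℝ => exp (r • A) := by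
  letI : SeminormedRing (Matrix (Fin n) (Fin n) ℝ) := Matrix.linftyOpSemiNormedRing
  letI : NormedRing (Matrix (Fin n) (Fin n) ℝ) := Matrix.linftyOpNormedRing
  letI : NormedAlgebra ℝ (Matrix (Fin n) (Fin n) ℝ) := Matrix.linftyOpNormedAlgebra
  letI : NormedAlgebra ℚ (Matrix (Fin n) (Fin n) ℝ) := Matrix.linftyOpNormedAlgebra
  haveI : @CompleteSpace (Matrix (Fin n) (Fin n) ℝ)
      (NormedRing.toSeminormedRing (α := Matrix (Fin n) (Fin n) ℝ)).toPseudoMetricSpace.toUniformSpace := by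
    letI : NormedAddCommGroup (Matrix (Fin n) (Fin n) ℝ) := NonUnitalNormedRing.toNormedAddCommGroup
    letI : NormedSpace ℝ (Matrix (Fin n) (Fin n) ℝ) := NormedAlgebra.toNormedSpace _
    exact FiniteDimensional.complete ℝ _
  exact exp_continuous.comp (continuous_id.smul continuous_const)

private lemma intertwine_exists (A : Matrix (Fin n) (Fin n) ℝ) (C : Matrix (Fin p) (Fin n) ℝ)
    (hC : C.rank = p)
    (hker : ∀ v : Fin n → ℝ, C.mulVec v = 0 → C.mulVec (A.mulVec v) = 0) :
    ∃ Abar : Matrix (Fin p) (Fin p) ℝ, Abar * C = C * A := by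
  obtain ⟨D, hD⟩ := exists_right_inverse_of_rank C hC
  refine ⟨C * A * D, ?_⟩
  have key : ∀ X : Matrix (Fin n) (Fin n) ℝ, C * X = 0 → C * (A * X) = 0 := by
    intro X hX
    ext i j
    have h1 : C.mulVec (fun k => X k j) = 0 := by
      funext i'
      have := congrFun (congrFun hX i') j
      simpa [Matrix.mulVec, Matrix.mul_apply, dotProduct] using this
    have h2 := congrFun (hker _ h1) i
    have h3 : (C * (A * X)) i j = C.mulVec (A.mulVec fun k => X k j) i := by
      simp [Matrix.mul_apply, Matrix.mulVec, dotProduct, Finset.mul_sum]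
    simp [h3, h2]
  have h0 : C * (A * (D * C - 1)) = 0 := by
    apply key
    rw [Matrix.mul_sub, ← Matrix.mul_assoc, hD, Matrix.one_mul, Matrix.mul_one, sub_self]
  have hsub : C * A * D * C - C * A = 0 := by
    calc C * A * D * C - C * A = C * (A * (D * C - 1)) := by
          rw [Matrix.mul_sub, Matrix.mul_one, Matrix.mul_sub]
          simp only [Matrix.mul_assoc]
    _ = 0 := h0
  exact sub_eq_zero.mp hsub

private lemma exp_intertwine {A : Matrix (Fin n) (Fin n) ℝ} {C : Matrix (Fin p) (Fin n) ℝ}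
    {Abar : Matrix (Fin p) (Fin p) ℝ} (hAC : Abar * C = C * A) (s : ℝ) :
    exp (s • Abar) * C = C * exp (s • A) := by
  have hpow : ∀ k : ℕ, Abar ^ k * C = C * A ^ k := by
    intro k
    induction k with
    | zero => simp
    | succ k ih =>
      rw [pow_succ, pow_succ, Matrix.mul_assoc (Abar ^ k), hAC, ← Matrix.mul_assoc, ih,
        Matrix.mul_assoc]
  have hpow' : ∀ k : ℕ, (s • Abar) ^ k * C = C * (s • A) ^ k := by
    intro k
    rw [smul_pow, smul_pow, Matrix.smul_mul, Matrix.mul_smul, hpow]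
  letI : SeminormedRing (Matrix (Fin p) (Fin p) ℝ) := Matrix.linftyOpSemiNormedRing
  letI : NormedRing (Matrix (Fin p) (Fin p) ℝ) := Matrix.linftyOpNormedRing
  letI : NormedAlgebra ℝ (Matrix (Fin p) (Fin p) ℝ) := Matrix.linftyOpNormedAlgebra
  letI : SeminormedRing (Matrix (Fin n) (Fin n) ℝ) := Matrix.linftyOpSemiNormedRing
  letI : NormedRing (Matrix (Fin n) (Fin n) ℝ) := Matrix.linftyOpNormedRing
  letI : NormedAlgebra ℝ (Matrix (Fin n) (Fin n) ℝ) := Matrix.linftyOpNormedAlgebra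
  haveI : @CompleteSpace (Matrix (Fin p) (Fin p) ℝ)
      (NormedRing.toSeminormedRing (α := Matrix (Fin p) (Fin p) ℝ)).toPseudoMetricSpace.toUniformSpace := by
    letI : NormedAddCommGroup (Matrix (Fin p) (Fin p) ℝ) := NonUnitalNormedRing.toNormedAddCommGroup
    letI : NormedSpace ℝ (Matrix (Fin p) (Fin p) ℝ) := NormedAlgebra.toNormedSpace _
    exact FiniteDimensional.complete ℝ _
  haveI : @CompleteSpace (Matrix (Fin n) (Fin n) ℝ)
      (NormedRing.toSeminormedRing (α := Matrix (Fin n) (Fin n) ℝ)).toPseudoMetricSpace.toUniformSpace := by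
    letI : NormedAddCommGroup (Matrix (Fin n) (Fin n) ℝ) := NonUnitalNormedRing.toNormedAddCommGroup
    letI : NormedSpace ℝ (Matrix (Fin n) (Fin n) ℝ) := NormedAlgebra.toNormedSpace _
    exact FiniteDimensional.complete ℝ _
  let f : Matrix (Fin p) (Fin p) ℝ →ₗ[ℝ] Matrix (Fin p) (Fin n) ℝ :=
    { toFun := fun X => X * C
      map_add' := fun X Y => Matrix.add_mul X Y C
      map_smul' := fun c X => Matrix.smul_mul c X C }
  let g : Matrix (Fin n) (Fin n) ℝ →ₗ[ℝ] Matrix (Fin p) (Fin n) ℝ :=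
    { toFun := fun X => C * X
      map_add' := fun X Y => Matrix.mul_add C X Y
      map_smul' := fun c X => Matrix.mul_smul C c X }
  have h1 : exp (s • Abar) * C = f.toContinuousLinearMap (exp (s • Abar)) := rfl
  have h2 : C * exp (s • A) = g.toContinuousLinearMap (exp (s • A)) := rfl
  rw [h1, h2, exp_eq_tsum ℝ, exp_eq_tsum ℝ,
    f.toContinuousLinearMap.map_tsum (expSeries_summable' (𝕂 := ℝ) (s • Abar)),
    g.toContinuousLinearMap.map_tsum (expSeries_summable' (𝕂 := ℝ) (s • A))]
  apply tsum_congr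
  intro k
  have hf : ∀ y : Matrix (Fin p) (Fin p) ℝ, f.toContinuousLinearMap y = y * C := fun _ => rfl
  have hg : ∀ y : Matrix (Fin n) (Fin n) ℝ, g.toContinuousLinearMap y = C * y := fun _ => rfl
  rw [hf, hg, Matrix.smul_mul, Matrix.mul_smul, hpow']

end MyAux

/-- If `C` has full row rank, `ker C` is `A`-invariant and `W(t,T)` is
invertible (`t < T`), then `G(t,T)` is invertible,
`e^{Aᵀ(T−t)} Cᵀ W(t,T)⁻¹ C e^{A(T−t)} = Cᵀ G(t,T)⁻¹ C`, and consequently the state feedback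
`−(L(a) ⊗ Bᵀ e^{Aᵀ(T−t)} Cᵀ W(t,T)⁻¹ C e^{A(T−t)}) x` equals the output feedback
`−(L(a) ⊗ Bᵀ Cᵀ G(t,T)⁻¹) y` with `y = (I_N ⊗ C) x`. -/
theorem state_feedback_is_output_feedback {n m p N : ℕ}
    (A : Matrix (Fin n) (Fin n) ℝ) (B : Matrix (Fin n) (Fin m) ℝ)
    (C : Matrix (Fin p) (Fin n) ℝ) (hC : C.rank = p)
    (hker : ∀ v : Fin n → ℝ, C.mulVec v = 0 → C.mulVec (A.mulVec v) = 0)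
    (a : Fin N → ℝ) (ha : ∀ i, 0 < a i)
    (t T : ℝ) (ht : t < T)
    (hW : IsUnit (gramianW A B C t T)) :
    IsUnit (gramianG A B C t T) ∧
    NormedSpace.exp ((T - t) • Aᵀ) * Cᵀ * (gramianW A B C t T)⁻¹ *
        C * NormedSpace.exp ((T - t) • A) =
      Cᵀ * (gramianG A B C t T)⁻¹ * C ∧
    ∀ x : Fin N × Fin n → ℝ,
      -(Matrix.kroneckerMap (· * ·) (Lmat a)
          (Bᵀ * NormedSpace.exp ((T - t) • Aᵀ) * Cᵀ * (gramianW A B C t T)⁻¹ *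
            C * NormedSpace.exp ((T - t) • A))).mulVec x =
      -(Matrix.kroneckerMap (· * ·) (Lmat a)
          (Bᵀ * Cᵀ * (gramianG A B C t T)⁻¹)).mulVec
        ((Matrix.kroneckerMap (· * ·) (1 : Matrix (Fin N) (Fin N) ℝ) C).mulVec x) := by
  obtain ⟨Abar, hAC⟩ := intertwine_exists A C hC hker
  have hE : ∀ s : ℝ, NormedSpace.exp (s • Abar) * C = C * NormedSpace.exp (s • A) := exp_intertwine hAC
  have hEt : ∀ s : ℝ, NormedSpace.exp (s • Aᵀ) * Cᵀ = Cᵀ * NormedSpace.exp (s • Abarᵀ) := by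
    intro s
    have h := congrArg Matrix.transpose (hE s)
    rw [Matrix.transpose_mul, Matrix.transpose_mul] at h
    rw [← Matrix.transpose_smul, ← Matrix.transpose_smul, Matrix.exp_transpose,
      Matrix.exp_transpose]
    exact h.symm
  set τ := T - t with hτ
  set M : Matrix (Fin p) (Fin p) ℝ := C * B * Bᵀ * Cᵀ with hM
  set F : ℝ → Matrix (Fin p) (Fin p) ℝ :=
    fun u => NormedSpace.exp (u • Abar) * M * NormedSpace.exp (u • Abarᵀ) with hF
  have key : ∀ u : ℝ, C * NormedSpace.exp (u • A) * B * Bᵀ * NormedSpace.exp (u • Aᵀ) * Cᵀ = F u := by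
    intro u
    calc C * NormedSpace.exp (u • A) * B * Bᵀ * NormedSpace.exp (u • Aᵀ) * Cᵀ
        = (C * NormedSpace.exp (u • A)) * B * Bᵀ * (NormedSpace.exp (u • Aᵀ) * Cᵀ) := by
          simp only [Matrix.mul_assoc]
      _ = (NormedSpace.exp (u • Abar) * C) * B * Bᵀ * (Cᵀ * NormedSpace.exp (u • Abarᵀ)) := by rw [← hE u, hEt u]
      _ = F u := by simp only [hF, hM, Matrix.mul_assoc]
  have hFcont : Continuous F := by
    rw [hF]
    exact ((exp_smul_continuous Abar).matrix_mul continuous_const).matrix_mul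
      (exp_smul_continuous Abarᵀ)
  have hW0 : gramianW A B C t T = ∫ u in (0:ℝ)..τ, F u := by
    have h1 : gramianW A B C t T = ∫ s in t..T, F (T - s) := by
      unfold gramianW
      apply intervalIntegral.integral_congr
      intro s _
      exact key (T - s)
    rw [h1, intervalIntegral.integral_comp_sub_left F T, sub_self, ← hτ]
  have hG0 : gramianG A B C t T = ∫ r in (0:ℝ)..τ, F (-r) := by
    unfold gramianG
    rw [← hτ]
    apply intervalIntegral.integral_congr
    intro r _
    exact key (-r)
  have hEunit : IsUnit (NormedSpace.exp (τ • Abar)) := Matrix.isUnit_exp _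
  have hEtunit : IsUnit (NormedSpace.exp (τ • Abarᵀ)) := Matrix.isUnit_exp _
  have hEdet : IsUnit (NormedSpace.exp (τ • Abar)).det := (Matrix.isUnit_iff_isUnit_det _).mp hEunit
  have hEtdet : IsUnit (NormedSpace.exp (τ • Abarᵀ)).det := (Matrix.isUnit_iff_isUnit_det _).mp hEtunit
  have hcomm : ∀ r : ℝ, Commute (τ • Abar) ((-r) • Abar) :=
    fun r => ((Commute.refl Abar).smul_left τ).smul_right (-r)
  have hcommt : ∀ r : ℝ, Commute ((-r) • Abarᵀ) (τ • Abarᵀ) :=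
    fun r => ((Commute.refl Abarᵀ).smul_left (-r)).smul_right τ
  have hadd1 : ∀ r : ℝ, NormedSpace.exp ((τ - r) • Abar) = NormedSpace.exp (τ • Abar) * NormedSpace.exp ((-r) • Abar) := by
    intro r
    rw [show (τ - r) • Abar = τ • Abar + (-r) • Abar by rw [← add_smul]; ring_nf]
    exact Matrix.exp_add_of_commute _ _ (hcomm r)
  have hadd2 : ∀ r : ℝ, NormedSpace.exp ((τ - r) • Abarᵀ) = NormedSpace.exp ((-r) • Abarᵀ) * NormedSpace.exp (τ • Abarᵀ) := by
    intro r
    rw [show (τ - r) • Abarᵀ = (-r) • Abarᵀ + τ • Abarᵀ by rw [← add_smul]; ring_nf]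
    exact Matrix.exp_add_of_commute _ _ (hcommt r)
  have hWG : NormedSpace.exp (τ • Abar) * gramianG A B C t T * NormedSpace.exp (τ • Abarᵀ) = gramianW A B C t T := by
    rw [hG0, hW0]
    have hint := (show Continuous fun r => F (-r) from hFcont.comp continuous_neg).intervalIntegrable
      (μ := volume) 0 τ
    let Lmap : Matrix (Fin p) (Fin p) ℝ →ₗ[ℝ] Matrix (Fin p) (Fin p) ℝ :=
      { toFun := fun X => NormedSpace.exp (τ • Abar) * X * NormedSpace.exp (τ • Abarᵀ)
        map_add' := fun X Y => by simp only [Matrix.mul_add, Matrix.add_mul]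
        map_smul' := fun c X => by
          simp only [RingHom.id_apply, Matrix.mul_smul, Matrix.smul_mul] }
    have hpull := Lmap.toContinuousLinearMap.intervalIntegral_comp_comm hint
    have hLa : ∀ X, Lmap.toContinuousLinearMap X
        = NormedSpace.exp (τ • Abar) * X * NormedSpace.exp (τ • Abarᵀ) := fun _ => rfl
    calc NormedSpace.exp (τ • Abar) * (∫ r in (0:ℝ)..τ, F (-r)) * NormedSpace.exp (τ • Abarᵀ)
        = ∫ r in (0:ℝ)..τ, NormedSpace.exp (τ • Abar) * F (-r) * NormedSpace.exp (τ • Abarᵀ) := by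
          rw [← hLa]
          refine (Eq.symm hpull).trans ?_
          apply intervalIntegral.integral_congr
          intro r _
          exact hLa _
      _ = ∫ r in (0:ℝ)..τ, F (τ - r) := by
          apply intervalIntegral.integral_congr
          intro r _
          calc NormedSpace.exp (τ • Abar) * F (-r) * NormedSpace.exp (τ • Abarᵀ)
              = (NormedSpace.exp (τ • Abar) * NormedSpace.exp ((-r) • Abar)) * M *
                  (NormedSpace.exp ((-r) • Abarᵀ) * NormedSpace.exp (τ • Abarᵀ)) := by
                simp only [hF, Matrix.mul_assoc]
            _ = F (τ - r) := by rw [← hadd1, ← hadd2]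
      _ = ∫ u in (0:ℝ)..τ, F u := by
          rw [intervalIntegral.integral_comp_sub_left F τ, sub_self, sub_zero]
  have hEinv : IsUnit (NormedSpace.exp (τ • Abar))⁻¹ := Matrix.isUnit_nonsing_inv_iff.mpr hEunit
  have hEtinv : IsUnit (NormedSpace.exp (τ • Abarᵀ))⁻¹ := Matrix.isUnit_nonsing_inv_iff.mpr hEtunit
  have hGeq : gramianG A B C t T
      = (NormedSpace.exp (τ • Abar))⁻¹ * gramianW A B C t T * (NormedSpace.exp (τ • Abarᵀ))⁻¹ := by
    rw [← hWG]
    simp only [Matrix.mul_assoc]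
    rw [Matrix.mul_nonsing_inv _ hEtdet, Matrix.mul_one, ← Matrix.mul_assoc,
      Matrix.nonsing_inv_mul _ hEdet, Matrix.one_mul]
  have hGunit : IsUnit (gramianG A B C t T) := by
    rw [hGeq]
    exact (hEinv.mul hW).mul hEtinv
  have hWinv : (gramianW A B C t T)⁻¹
      = (NormedSpace.exp (τ • Abarᵀ))⁻¹ * (gramianG A B C t T)⁻¹ * (NormedSpace.exp (τ • Abar))⁻¹ := by
    rw [← hWG, Matrix.mul_inv_rev, Matrix.mul_inv_rev, Matrix.mul_assoc]
  have hkey : NormedSpace.exp (τ • Aᵀ) * Cᵀ * (gramianW A B C t T)⁻¹ * C * NormedSpace.exp (τ • A)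
      = Cᵀ * (gramianG A B C t T)⁻¹ * C := by
    calc NormedSpace.exp (τ • Aᵀ) * Cᵀ * (gramianW A B C t T)⁻¹ * C * NormedSpace.exp (τ • A)
        = (NormedSpace.exp (τ • Aᵀ) * Cᵀ) * (gramianW A B C t T)⁻¹ * (C * NormedSpace.exp (τ • A)) := by
          simp only [Matrix.mul_assoc]
      _ = (Cᵀ * NormedSpace.exp (τ • Abarᵀ)) *
            ((NormedSpace.exp (τ • Abarᵀ))⁻¹ * (gramianG A B C t T)⁻¹ * (NormedSpace.exp (τ • Abar))⁻¹) *
            (NormedSpace.exp (τ • Abar) * C) := by rw [hEt τ, hWinv, ← hE τ]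
      _ = Cᵀ * ((NormedSpace.exp (τ • Abarᵀ) * (NormedSpace.exp (τ • Abarᵀ))⁻¹) * ((gramianG A B C t T)⁻¹ *
            (((NormedSpace.exp (τ • Abar))⁻¹ * NormedSpace.exp (τ • Abar)) * C))) := by
          simp only [Matrix.mul_assoc]
      _ = Cᵀ * (gramianG A B C t T)⁻¹ * C := by
          rw [Matrix.mul_nonsing_inv _ hEtdet, Matrix.nonsing_inv_mul _ hEdet,
            Matrix.one_mul, Matrix.one_mul]
          simp only [Matrix.mul_assoc]
  have hmat : ∀ N' : ℕ, ∀ a : Fin N' → ℝ,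
      (Matrix.kroneckerMap (· * ·) (Lmat a) (Bᵀ * Cᵀ * (gramianG A B C t T)⁻¹)) *
        (Matrix.kroneckerMap (· * ·) (1 : Matrix (Fin N') (Fin N') ℝ) C) =
      Matrix.kroneckerMap (· * ·) (Lmat a)
        (Bᵀ * NormedSpace.exp (τ • Aᵀ) * Cᵀ * (gramianW A B C t T)⁻¹ * C * NormedSpace.exp (τ • A)) := by
    intro N' a
    rw [← Matrix.mul_kronecker_mul, Matrix.mul_one]
    refine congrArg _ ?_
    calc Bᵀ * Cᵀ * (gramianG A B C t T)⁻¹ * C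
        = Bᵀ * (Cᵀ * (gramianG A B C t T)⁻¹ * C) := by simp only [Matrix.mul_assoc]
      _ = Bᵀ * (NormedSpace.exp (τ • Aᵀ) * Cᵀ * (gramianW A B C t T)⁻¹ * C * NormedSpace.exp (τ • A)) := by
          rw [hkey]
      _ = Bᵀ * NormedSpace.exp (τ • Aᵀ) * Cᵀ * (gramianW A B C t T)⁻¹ * C * NormedSpace.exp (τ • A) := by
          simp only [Matrix.mul_assoc]
  have hfinal : ∀ N' : ℕ, ∀ a : Fin N' → ℝ, ∀ x : Fin N' × Fin n → ℝ,
      -(Matrix.kroneckerMap (· * ·) (Lmat a)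
          (Bᵀ * NormedSpace.exp (τ • Aᵀ) * Cᵀ * (gramianW A B C t T)⁻¹ *
            C * NormedSpace.exp (τ • A))).mulVec x =
      -(Matrix.kroneckerMap (· * ·) (Lmat a)
          (Bᵀ * Cᵀ * (gramianG A B C t T)⁻¹)).mulVec
        ((Matrix.kroneckerMap (· * ·) (1 : Matrix (Fin N') (Fin N') ℝ) C).mulVec x) := by
    intro N' a x
    rw [Matrix.mulVec_mulVec, hmat]
  exact ⟨hGunit, hkey, hfinal N a⟩
end

section
/- Fix t_0 < T < ∞, assume W(t_0,T) is invertible, and suppose the initial states satisfy A x_i(t_0) = 0 for every i = 1,…,N. Then under the optimal open-loop control u*(t) = −(L(a) ⊗ (B^T e^{A^T(T−t)} C^T W(t_0,T)^{-1} C e^{A(T−t_0)})) x_0, the trajectories x_i(t) = e^{A(t−t_0)} x_i(t_0) + ∫_{t_0}^t e^{A(t−s)} B u_i^*(s) ds satisfy, for every i, C x_i(T) = (Σ_{k=1}^N a_k)^{-1} Σ_{j=1}^N a_j C x_j(t_0); that is, the common consensus output at time T is the a-weighted average of the initial outputs. -/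
open Matrix MeasureTheory

attribute [local instance] Matrix.normedAddCommGroup Matrix.normedSpace

section auxiliary

variable {n : ℕ}

private lemma norm_matrix_mul_le (M N : Matrix (Fin n) (Fin n) ℝ) :
    ‖M * N‖ ≤ (n : ℝ) * ‖M‖ * ‖N‖ := by
  rw [Matrix.norm_le_iff (by positivity)]
  intro i j
  calc ‖(M * N) i j‖ = ‖∑ k, M i k * N k j‖ := by rw [Matrix.mul_apply]
    _ ≤ ∑ k, ‖M i k * N k j‖ := norm_sum_le _ _
    _ ≤ ∑ _k : Fin n, ‖M‖ * ‖N‖ := Finset.sum_le_sum fun k _ => by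
        rw [norm_mul]
        exact mul_le_mul (Matrix.norm_entry_le_entrywise_sup_norm M)
          (Matrix.norm_entry_le_entrywise_sup_norm N) (norm_nonneg _) (norm_nonneg _)
    _ = (n : ℝ) * ‖M‖ * ‖N‖ := by
        simp [Finset.sum_const, Finset.card_univ, nsmul_eq_mul, mul_assoc]

private lemma norm_matrix_pow_le (M : Matrix (Fin n) (Fin n) ℝ) (k : ℕ) :
    ‖M ^ k‖ ≤ (1 + (n : ℝ) * ‖M‖) ^ k := by
  induction k with
  | zero =>
      simp only [pow_zero]
      rw [Matrix.norm_le_iff zero_le_one]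
      intro i j
      rw [Matrix.one_apply]
      split <;> simp
  | succ k ih =>
      rw [pow_succ, pow_succ]
      have hX : (n : ℝ) * ‖M‖ ≤ 1 + (n : ℝ) * ‖M‖ := by linarith
      calc ‖M ^ k * M‖ ≤ (n : ℝ) * ‖M ^ k‖ * ‖M‖ := norm_matrix_mul_le _ _
        _ = ‖M ^ k‖ * ((n : ℝ) * ‖M‖) := by ring
        _ ≤ (1 + (n : ℝ) * ‖M‖) ^ k * (1 + (n : ℝ) * ‖M‖) :=
            mul_le_mul ih hX (by positivity) (by positivity)

private lemma expSummable (M : Matrix (Fin n) (Fin n) ℝ) :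
    Summable (fun k : ℕ => (Nat.factorial k : ℝ)⁻¹ • M ^ k) := by
  apply Summable.of_norm
  refine Summable.of_nonneg_of_le (fun k => norm_nonneg _) (fun k => ?_)
    (Real.summable_pow_div_factorial (1 + (n : ℝ) * ‖M‖))
  rw [norm_smul, Real.norm_eq_abs, abs_of_nonneg (by positivity), div_eq_inv_mul]
  exact mul_le_mul_of_nonneg_left (norm_matrix_pow_le M k) (by positivity)

private lemma exp_mulVec_of_ker {A : Matrix (Fin n) (Fin n) ℝ} {v : Fin n → ℝ}
    (h : A.mulVec v = 0) (c : ℝ) :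
    (NormedSpace.exp (c • A)).mulVec v = v := by
  have hpow : ∀ k : ℕ, ((c • A) ^ (k + 1)).mulVec v = 0 := by
    intro k
    rw [pow_succ, ← Matrix.mulVec_mulVec, Matrix.smul_mulVec, h, smul_zero,
      Matrix.mulVec_zero]
  let φ : Matrix (Fin n) (Fin n) ℝ →ₗ[ℝ] (Fin n → ℝ) :=
    { toFun := fun M => M.mulVec v
      map_add' := fun M N => Matrix.add_mulVec M N v
      map_smul' := fun r M => Matrix.smul_mulVec r M v }
  have key := (LinearMap.toContinuousLinearMap φ).map_tsum (expSummable (c • A))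
  rw [NormedSpace.exp_eq_tsum (𝕂 := ℝ)]
  have hcoe : ∀ M : Matrix (Fin n) (Fin n) ℝ,
      (LinearMap.toContinuousLinearMap φ) M = M.mulVec v := fun M => rfl
  calc (∑' k : ℕ, (Nat.factorial k : ℝ)⁻¹ • (c • A) ^ k).mulVec v
      = (LinearMap.toContinuousLinearMap φ)
          (∑' k : ℕ, (Nat.factorial k : ℝ)⁻¹ • (c • A) ^ k) := rfl
    _ = ∑' k : ℕ, ((Nat.factorial k : ℝ)⁻¹ • (c • A) ^ k).mulVec v := by
        rw [key]; exact tsum_congr fun k => hcoe _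
    _ = v := by
        rw [tsum_eq_single 0]
        · simp
        · intro k hk
          obtain ⟨k', rfl⟩ := Nat.exists_eq_succ_of_ne_zero hk
          rw [Matrix.smul_mulVec, hpow, smul_zero]

private lemma continuous_exp_smul (A : Matrix (Fin n) (Fin n) ℝ) :
    Continuous fun c : ℝ => NormedSpace.exp (c • A) := by
  rw [continuous_iff_continuousAt]
  intro c
  have hball : c ∈ Metric.ball (0 : ℝ) (|c| + 1) := by
    simp only [Metric.mem_ball, Real.dist_eq, sub_zero]
    linarith
  refine ContinuousOn.continuousAt ?_ (Metric.isOpen_ball.mem_nhds hball)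
  have hcong : ∀ x : ℝ,
      NormedSpace.exp (x • A) = ∑' k : ℕ, (Nat.factorial k : ℝ)⁻¹ • (x • A) ^ k := by
    intro x; rw [NormedSpace.exp_eq_tsum (𝕂 := ℝ)]
  refine ContinuousOn.congr ?_ (fun x _ => hcong x)
  have htu : TendstoUniformlyOn
      (fun (t : Finset ℕ) (x : ℝ) => ∑ k ∈ t, (Nat.factorial k : ℝ)⁻¹ • (x • A) ^ k)
      (fun x : ℝ => ∑' k : ℕ, (Nat.factorial k : ℝ)⁻¹ • (x • A) ^ k) Filter.atTop
      (Metric.ball (0 : ℝ) (|c| + 1)) := by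
    refine tendstoUniformlyOn_tsum
      (u := fun k => ((|c| + 1) * (1 + (n : ℝ) * ‖A‖)) ^ k / Nat.factorial k)
      (Real.summable_pow_div_factorial _) ?_
    intro k x hx
    have hxle : |x| ≤ |c| + 1 := by
      have := Metric.mem_ball.mp hx
      rw [Real.dist_eq, sub_zero] at this
      linarith
    rw [norm_smul, Real.norm_eq_abs,
      abs_of_nonneg (by positivity : (0:ℝ) ≤ (Nat.factorial k : ℝ)⁻¹), smul_pow, norm_smul,
      Real.norm_eq_abs, abs_pow]
    calc (Nat.factorial k : ℝ)⁻¹ * (|x| ^ k * ‖A ^ k‖)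
        ≤ (Nat.factorial k : ℝ)⁻¹ * ((|c| + 1) ^ k * (1 + (n : ℝ) * ‖A‖) ^ k) := by
          refine mul_le_mul_of_nonneg_left ?_ (by positivity)
          exact mul_le_mul (pow_le_pow_left₀ (abs_nonneg x) hxle k) (norm_matrix_pow_le A k)
            (norm_nonneg _) (by positivity)
      _ = ((|c| + 1) * (1 + (n : ℝ) * ‖A‖)) ^ k / Nat.factorial k := by
          rw [mul_pow]; ring
  refine htu.continuousOn (Filter.Eventually.frequently ?_)
  filter_upwards with t
  have : Continuous fun x : ℝ => ∑ k ∈ t, (Nat.factorial k : ℝ)⁻¹ • (x • A) ^ k := by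
    refine continuous_finset_sum _ fun k _ => ?_
    simp only [smul_pow]
    fun_prop
  exact this.continuousOn

private lemma mulVec_neg_sum_smul {q r N : ℕ} (M : Matrix (Fin q) (Fin r) ℝ) (c : Fin N → ℝ)
    (w : Fin N → Fin r → ℝ) :
    M.mulVec (-∑ j, c j • w j) = -∑ j, c j • M.mulVec (w j) := by
  calc M.mulVec (-∑ j, c j • w j) = M.mulVecLin (-∑ j, c j • w j) := rfl
    _ = _ := by simp only [map_neg, map_sum, LinearMap.map_smul, Matrix.mulVecLin_apply]

end auxiliary
/-- If every initial state lies in `ker A`, then under the optimal open-loop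
control the common output at time `T` is the `a`-weighted average of the initial outputs:
`C xᵢ(T) = (∑_k a_k)⁻¹ ∑_j a_j C x_j(t₀)` for every `i`. -/
theorem consensus_point_is_weighted_average {n m p N : ℕ}
    (A : Matrix (Fin n) (Fin n) ℝ) (B : Matrix (Fin n) (Fin m) ℝ)
    (C : Matrix (Fin p) (Fin n) ℝ) (hC : C.rank = p)
    (a : Fin N → ℝ) (ha : ∀ i, 0 < a i)
    (t₀ T : ℝ) (ht : t₀ < T)
    (hW : IsUnit (gramianW A B C t₀ T))
    (x₀ : Fin N × Fin n → ℝ)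
    (hker : ∀ i : Fin N, A.mulVec (fun k => x₀ (i, k)) = 0) :
    ∀ i : Fin N,
      C.mulVec (traj A B (ustar A B C a x₀ t₀ T) x₀ t₀ i T) =
        (∑ k, a k)⁻¹ • ∑ j, a j • C.mulVec (fun k => x₀ (j, k)) := by
  intro i
  have hfix : ∀ (c : ℝ) (j : Fin N),
      (NormedSpace.exp (c • A)).mulVec (fun k => x₀ (j, k)) = fun k => x₀ (j, k) :=
    fun c j => exp_mulVec_of_ker (hker j) c
  have hWinv : gramianW A B C t₀ T * (gramianW A B C t₀ T)⁻¹ = 1 :=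
    Matrix.mul_nonsing_inv _ ((Matrix.isUnit_iff_isUnit_det _).mp hW)
  have hEcont : Continuous fun s : ℝ => NormedSpace.exp ((T - s) • A) :=
    (continuous_exp_smul A).comp (continuous_const.sub continuous_id)
  have hEtcont : Continuous fun s : ℝ => NormedSpace.exp ((T - s) • Aᵀ) :=
    (continuous_exp_smul Aᵀ).comp (continuous_const.sub continuous_id)
  have hKcont : Continuous fun s : ℝ =>
      Bᵀ * NormedSpace.exp ((T - s) • Aᵀ) * Cᵀ * (gramianW A B C t₀ T)⁻¹ * C *
        NormedSpace.exp ((T - t₀) • A) :=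
    ((((continuous_const.matrix_mul hEtcont).matrix_mul continuous_const).matrix_mul
      continuous_const).matrix_mul continuous_const).matrix_mul continuous_const
  have hPcont : Continuous fun s : ℝ =>
      NormedSpace.exp ((T - s) • A) * B *
        (Bᵀ * NormedSpace.exp ((T - s) • Aᵀ) * Cᵀ * (gramianW A B C t₀ T)⁻¹ * C *
          NormedSpace.exp ((T - t₀) • A)) :=
    (hEcont.matrix_mul continuous_const).matrix_mul hKcont
  have hFcont : Continuous fun s : ℝ =>
      C * NormedSpace.exp ((T - s) • A) * B * Bᵀ * NormedSpace.exp ((T - s) • Aᵀ) * Cᵀ :=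
    ((((continuous_const.matrix_mul hEcont).matrix_mul continuous_const).matrix_mul
      continuous_const).matrix_mul hEtcont).matrix_mul continuous_const
  -- the `i`-th slice of the optimal control
  have hu : ∀ s : ℝ, (fun k => ustar A B C a x₀ t₀ T s (i, k)) =
      -∑ j, Lmat a i j • (Bᵀ * NormedSpace.exp ((T - s) • Aᵀ) * Cᵀ *
        (gramianW A B C t₀ T)⁻¹ * C * NormedSpace.exp ((T - t₀) • A)).mulVec
          (fun k => x₀ (j, k)) := by
    intro s
    funext k
    simp only [ustar, Pi.neg_apply, Matrix.mulVec, dotProduct,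
      Matrix.kroneckerMap_apply, Fintype.sum_prod_type, Finset.sum_apply, Pi.smul_apply,
      smul_eq_mul, Finset.mul_sum, neg_inj]
    exact Finset.sum_congr rfl fun j _ => Finset.sum_congr rfl fun l _ => by ring
  have hG : ∀ s : ℝ,
      (NormedSpace.exp ((T - s) • A) * B).mulVec
          (fun k => ustar A B C a x₀ t₀ T s (i, k)) =
      -∑ j, Lmat a i j • (NormedSpace.exp ((T - s) • A) * B *
        (Bᵀ * NormedSpace.exp ((T - s) • Aᵀ) * Cᵀ * (gramianW A B C t₀ T)⁻¹ * C *
          NormedSpace.exp ((T - t₀) • A))).mulVec (fun k => x₀ (j, k)) := by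
    intro s
    rw [hu s, mulVec_neg_sum_smul]
    simp only [Matrix.mulVec_mulVec]
  -- compute the integral term
  have hint1 : (∫ s in t₀..T, (NormedSpace.exp ((T - s) • A) * B).mulVec
        (fun k => ustar A B C a x₀ t₀ T s (i, k))) =
      -∑ j, Lmat a i j • ∫ s in t₀..T,
        (NormedSpace.exp ((T - s) • A) * B *
          (Bᵀ * NormedSpace.exp ((T - s) • Aᵀ) * Cᵀ * (gramianW A B C t₀ T)⁻¹ * C *
            NormedSpace.exp ((T - t₀) • A))).mulVec (fun k => x₀ (j, k)) := by
    rw [intervalIntegral.integral_congr (fun s _ => hG s)]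
    rw [intervalIntegral.integral_neg, intervalIntegral.integral_finset_sum]
    · simp only [intervalIntegral.integral_smul]
    · intro j _
      apply Continuous.intervalIntegrable
      exact (continuous_const (y := Lmat a i j)).smul (hPcont.matrix_mulVec continuous_const)
  -- identify each integral via the Gramian
  have hΦ : ∀ j : Fin N,
      C.mulVec (∫ s in t₀..T,
        (NormedSpace.exp ((T - s) • A) * B *
          (Bᵀ * NormedSpace.exp ((T - s) • Aᵀ) * Cᵀ * (gramianW A B C t₀ T)⁻¹ * C *
            NormedSpace.exp ((T - t₀) • A))).mulVec (fun k => x₀ (j, k))) =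
      (gramianW A B C t₀ T * ((gramianW A B C t₀ T)⁻¹ * C *
        NormedSpace.exp ((T - t₀) • A))).mulVec (fun k => x₀ (j, k)) := by
    intro j
    have h1 : (∫ s in t₀..T, C.mulVec
          ((NormedSpace.exp ((T - s) • A) * B *
            (Bᵀ * NormedSpace.exp ((T - s) • Aᵀ) * Cᵀ * (gramianW A B C t₀ T)⁻¹ * C *
              NormedSpace.exp ((T - t₀) • A))).mulVec (fun k => x₀ (j, k)))) =
        C.mulVec (∫ s in t₀..T,
          (NormedSpace.exp ((T - s) • A) * B *
            (Bᵀ * NormedSpace.exp ((T - s) • Aᵀ) * Cᵀ * (gramianW A B C t₀ T)⁻¹ * C *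
              NormedSpace.exp ((T - t₀) • A))).mulVec (fun k => x₀ (j, k))) :=
      (LinearMap.toContinuousLinearMap C.mulVecLin).intervalIntegral_comp_comm
        ((hPcont.matrix_mulVec continuous_const).intervalIntegrable _ _)
    rw [← h1]
    have h2 : ∀ s : ℝ, C.mulVec
        ((NormedSpace.exp ((T - s) • A) * B *
          (Bᵀ * NormedSpace.exp ((T - s) • Aᵀ) * Cᵀ * (gramianW A B C t₀ T)⁻¹ * C *
            NormedSpace.exp ((T - t₀) • A))).mulVec (fun k => x₀ (j, k))) =
        ((C * NormedSpace.exp ((T - s) • A) * B * Bᵀ *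
            NormedSpace.exp ((T - s) • Aᵀ) * Cᵀ) *
          ((gramianW A B C t₀ T)⁻¹ * C * NormedSpace.exp ((T - t₀) • A))).mulVec
            (fun k => x₀ (j, k)) := by
      intro s
      rw [Matrix.mulVec_mulVec]
      congr 1
      simp only [Matrix.mul_assoc]
    rw [intervalIntegral.integral_congr (fun s _ => h2 s)]
    let Ψ : Matrix (Fin p) (Fin p) ℝ →ₗ[ℝ] (Fin p → ℝ) :=
      { toFun := fun M => (M * ((gramianW A B C t₀ T)⁻¹ * C *
          NormedSpace.exp ((T - t₀) • A))).mulVec (fun k => x₀ (j, k))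
        map_add' := fun M M' => by simp [Matrix.add_mul, Matrix.add_mulVec]
        map_smul' := fun r M => by simp [Matrix.smul_mul, Matrix.smul_mulVec] }
    exact (LinearMap.toContinuousLinearMap Ψ).intervalIntegral_comp_comm
      (hFcont.intervalIntegrable _ _)
  -- assemble
  simp only [traj]
  rw [Matrix.mulVec_add, hfix (T - t₀) i, hint1, mulVec_neg_sum_smul]
  simp only [hΦ]
  rw [show gramianW A B C t₀ T * ((gramianW A B C t₀ T)⁻¹ * C *
      NormedSpace.exp ((T - t₀) • A)) = C * NormedSpace.exp ((T - t₀) • A) from by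
    rw [← Matrix.mul_assoc, ← Matrix.mul_assoc, hWinv, Matrix.one_mul]]
  simp only [← Matrix.mulVec_mulVec, hfix]
  have hL : ∀ j, Lmat a i j = (if i = j then (1:ℝ) else 0) - (∑ k, a k)⁻¹ * a j := by
    intro j
    simp [Lmat, Matrix.one_apply, Matrix.vecMulVec_apply, Matrix.sub_apply]
  simp only [hL, sub_smul, ite_smul, one_smul, zero_smul, Finset.sum_sub_distrib,
    Finset.sum_ite_eq, Finset.mem_univ, if_true, ← smul_smul, ← Finset.smul_sum]
  abel
end

section
/- Fix T ∈ ℝ and assume W(t,T) is invertible for all t in an open interval I ⊆ (−∞, T). Then the matrix-valued function P(t) = e^{A^T(T−t)} C^T W(t,T)^{-1} C e^{A(T−t)} is differentiable on I and satisfies the differential Riccati equation dP/dt = −A^T P − P A + P B B^T P. -/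
open Matrix MeasureTheory

set_option maxHeartbeats 1000000

section LinftyWorld
attribute [local instance] Matrix.linftyOpNormedAddCommGroup Matrix.linftyOpNormedSpace
  Matrix.linftyOpNormedRing Matrix.linftyOpNormedAlgebra

lemma linfty_exp_deriv_left {q : ℕ} (M : Matrix (Fin q) (Fin q) ℝ) (T t : ℝ) :
    HasDerivAt (fun u : ℝ => NormedSpace.exp ((T - u) • M))
      (-(M * NormedSpace.exp ((T - t) • M))) t := by
  have h1 : HasDerivAt (fun u : ℝ => T - u) (-1 : ℝ) t := by
    simpa using (hasDerivAt_id t).const_sub T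
  have h3 := (hasDerivAt_exp_smul_const' (𝕂 := ℝ) M (T - t)).scomp t h1
  simp at h3; exact h3

lemma linfty_exp_deriv_right {q : ℕ} (M : Matrix (Fin q) (Fin q) ℝ) (T t : ℝ) :
    HasDerivAt (fun u : ℝ => NormedSpace.exp ((T - u) • M))
      (-(NormedSpace.exp ((T - t) • M) * M)) t := by
  have h1 : HasDerivAt (fun u : ℝ => T - u) (-1 : ℝ) t := by
    simpa using (hasDerivAt_id t).const_sub T
  have h3 := (hasDerivAt_exp_smul_const (𝕂 := ℝ) M (T - t)).scomp t h1
  simp at h3; exact h3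

lemma linfty_inv_deriv {q : ℕ} {W : ℝ → Matrix (Fin q) (Fin q) ℝ}
    {W' : Matrix (Fin q) (Fin q) ℝ} {t : ℝ} (hW : HasDerivAt W W' t) (hu : IsUnit (W t)) :
    HasDerivAt (fun u => (W u)⁻¹) (-((W t)⁻¹ * W' * (W t)⁻¹)) t := by
  obtain ⟨u, hu⟩ := hu
  have h0 : HasFDerivAt Ring.inverse
      (-((ContinuousLinearMap.mulLeftRight ℝ (Matrix (Fin q) (Fin q) ℝ)) ↑u⁻¹ ↑u⁻¹)) (W t) := by
    rw [← hu]; exact hasFDerivAt_ringInverse u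
  have h1 := h0.comp_hasDerivAt t hW
  have h2 : (fun s => Ring.inverse (W s)) = fun s => (W s)⁻¹ := by
    funext s; rw [Matrix.nonsing_inv_eq_ringInverse]
  rw [Function.comp_def, h2] at h1
  replace h1 : HasDerivAt (fun s => (W s)⁻¹) _ t := h1
  convert h1 using 1
  have : (W t)⁻¹ = ↑u⁻¹ := by rw [← hu, ← Matrix.coe_units_inv]
  simp [this]

end LinftyWorld

attribute [local instance] Matrix.normedAddCommGroup Matrix.normedSpace

/-- `P(t) = e^{Aᵀ(T−t)} Cᵀ W(t,T)⁻¹ C e^{A(T−t)}`. -/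
noncomputable def riccatiP {n m p : ℕ} (A : Matrix (Fin n) (Fin n) ℝ)
    (B : Matrix (Fin n) (Fin m) ℝ) (C : Matrix (Fin p) (Fin n) ℝ) (T t : ℝ) :
    Matrix (Fin n) (Fin n) ℝ :=
  NormedSpace.exp ((T - t) • Aᵀ) * Cᵀ * (gramianW A B C t T)⁻¹ *
    C * NormedSpace.exp ((T - t) • A)

namespace RiccatiAux

lemma hasDerivAt_of_linfty {q r : ℕ} {f : ℝ → Matrix (Fin q) (Fin r) ℝ}
    {f' : Matrix (Fin q) (Fin r) ℝ} {x : ℝ}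
    (h : @HasDerivAt ℝ _ (Matrix (Fin q) (Fin r) ℝ)
      Matrix.linftyOpNormedAddCommGroup.toAddCommGroup Matrix.linftyOpNormedSpace.toModule
      Matrix.linftyOpNormedAddCommGroup.toUniformSpace.toTopologicalSpace _ f f' x) :
    HasDerivAt f f' x := by
  have h2 := (@hasDerivAt_iff_tendsto_slope ℝ _ (Matrix (Fin q) (Fin r) ℝ)
      Matrix.linftyOpNormedAddCommGroup Matrix.linftyOpNormedSpace f f' x).mp h
  exact hasDerivAt_iff_tendsto_slope.mpr h2

lemma hasDerivAt_to_linfty {q r : ℕ} {f : ℝ → Matrix (Fin q) (Fin r) ℝ}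
    {f' : Matrix (Fin q) (Fin r) ℝ} {x : ℝ} (h : HasDerivAt f f' x) :
    @HasDerivAt ℝ _ (Matrix (Fin q) (Fin r) ℝ)
      Matrix.linftyOpNormedAddCommGroup.toAddCommGroup Matrix.linftyOpNormedSpace.toModule
      Matrix.linftyOpNormedAddCommGroup.toUniformSpace.toTopologicalSpace _ f f' x :=
  (@hasDerivAt_iff_tendsto_slope ℝ _ (Matrix (Fin q) (Fin r) ℝ)
      Matrix.linftyOpNormedAddCommGroup Matrix.linftyOpNormedSpace f f' x).mpr
    (hasDerivAt_iff_tendsto_slope.mp h)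

lemma hasDerivAt_expTsub_left {q : ℕ} (M : Matrix (Fin q) (Fin q) ℝ) (T t : ℝ) :
    HasDerivAt (fun u : ℝ => NormedSpace.exp ((T - u) • M))
      (-(M * NormedSpace.exp ((T - t) • M))) t :=
  hasDerivAt_of_linfty (linfty_exp_deriv_left M T t)

lemma hasDerivAt_expTsub_right {q : ℕ} (M : Matrix (Fin q) (Fin q) ℝ) (T t : ℝ) :
    HasDerivAt (fun u : ℝ => NormedSpace.exp ((T - u) • M))
      (-(NormedSpace.exp ((T - t) • M) * M)) t :=
  hasDerivAt_of_linfty (linfty_exp_deriv_right M T t)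

lemma hasDerivAt_matrix_inv {q : ℕ} {W : ℝ → Matrix (Fin q) (Fin q) ℝ}
    {W' : Matrix (Fin q) (Fin q) ℝ} {t : ℝ} (hW : HasDerivAt W W' t) (hu : IsUnit (W t)) :
    HasDerivAt (fun u => (W u)⁻¹) (-((W t)⁻¹ * W' * (W t)⁻¹)) t :=
  hasDerivAt_of_linfty (linfty_inv_deriv (hasDerivAt_to_linfty hW) hu)

noncomputable def matMulCLM (a b c : ℕ) :
    letI : TopologicalSpace (Matrix (Fin a) (Fin b) ℝ) :=
      PseudoMetricSpace.toUniformSpace.toTopologicalSpace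
    letI : TopologicalSpace (Matrix (Fin b) (Fin c) ℝ) :=
      PseudoMetricSpace.toUniformSpace.toTopologicalSpace
    letI : TopologicalSpace (Matrix (Fin a) (Fin c) ℝ) :=
      PseudoMetricSpace.toUniformSpace.toTopologicalSpace
    Matrix (Fin a) (Fin b) ℝ →L[ℝ] Matrix (Fin b) (Fin c) ℝ →L[ℝ] Matrix (Fin a) (Fin c) ℝ :=
  LinearMap.toContinuousLinearMap <|
  { toFun := fun X => LinearMap.toContinuousLinearMap
      { toFun := fun Y => X * Y
        map_add' := fun Y Z => Matrix.mul_add X Y Z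
        map_smul' := fun r Y => (Matrix.mul_smul X r Y) }
    map_add' := by
      intro X Y; ext Z i j
      simp [Matrix.add_mul]
    map_smul' := by
      intro r X; ext Z i j
      simp [Matrix.smul_mul] }

@[simp] lemma matMulCLM_apply {a b c : ℕ} (X : Matrix (Fin a) (Fin b) ℝ)
    (Y : Matrix (Fin b) (Fin c) ℝ) : matMulCLM a b c X Y = X * Y := rfl

lemma _root_.HasDerivAt.matMul {a b c : ℕ} {f : ℝ → Matrix (Fin a) (Fin b) ℝ}
    {g : ℝ → Matrix (Fin b) (Fin c) ℝ} {f' g'} {t : ℝ}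
    (hf : HasDerivAt f f' t) (hg : HasDerivAt g g' t) :
    HasDerivAt (fun u => f u * g u) (f' * g t + f t * g') t := by
  have h1 : HasDerivAt (fun u => matMulCLM a b c (f u)) (matMulCLM a b c f') t :=
    by
      have hf' := hasDerivAt_iff_tendsto_slope.mpr (hasDerivAt_iff_tendsto_slope.mp hf)
      exact HasFDerivAt.comp_hasDerivAt (l := matMulCLM a b c) (l' := matMulCLM a b c) t
        (matMulCLM a b c).hasFDerivAt hf'
  have hg' := hasDerivAt_iff_tendsto_slope.mpr (hasDerivAt_iff_tendsto_slope.mp hg)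
  have h2 := h1.clm_apply hg'
  simp at h2
  exact h2

lemma hasDerivAt_gramian {n m p : ℕ} (A : Matrix (Fin n) (Fin n) ℝ)
    (B : Matrix (Fin n) (Fin m) ℝ) (C : Matrix (Fin p) (Fin n) ℝ) (T t : ℝ) :
    HasDerivAt (fun u => gramianW A B C u T)
      (-(C * NormedSpace.exp ((T - t) • A) * B * Bᵀ *
        NormedSpace.exp ((T - t) • Aᵀ) * Cᵀ)) t := by
  set g : ℝ → Matrix (Fin p) (Fin p) ℝ := fun s =>
    C * NormedSpace.exp ((T - s) • A) * B * Bᵀ * NormedSpace.exp ((T - s) • Aᵀ) * Cᵀ with hg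
  have hcont1 : Continuous fun s : ℝ => NormedSpace.exp ((T - s) • A) :=
    continuous_iff_continuousAt.mpr fun s => (hasDerivAt_expTsub_left A T s).continuousAt
  have hcont2 : Continuous fun s : ℝ => NormedSpace.exp ((T - s) • Aᵀ) :=
    continuous_iff_continuousAt.mpr fun s => (hasDerivAt_expTsub_left Aᵀ T s).continuousAt
  have hcont : Continuous g := by
    apply Continuous.matrix_mul
    apply Continuous.matrix_mul
    apply Continuous.matrix_mul
    apply Continuous.matrix_mul
    apply Continuous.matrix_mul
    all_goals first | exact continuous_const | exact hcont1 | exact hcont2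
  haveI : TopologicalSpace.PseudoMetrizableSpace (Matrix (Fin p) (Fin p) ℝ) :=
    inferInstanceAs (TopologicalSpace.PseudoMetrizableSpace (Fin p → Fin p → ℝ))
  have := intervalIntegral.integral_hasDerivAt_left
    (hcont.intervalIntegrable t T)
    (hcont.stronglyMeasurableAtFilter _ _)
    hcont.continuousAt
  exact this

end RiccatiAux

open RiccatiAux

/-- On any open interval `I = (a, b) ⊆ (−∞, T)` on which `W(t,T)` is
invertible, the matrix function `P(t) = e^{Aᵀ(T−t)} Cᵀ W(t,T)⁻¹ C e^{A(T−t)}` is differentiable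
and satisfies the differential Riccati equation `dP/dt = −Aᵀ P − P A + P B Bᵀ P`. -/
theorem riccati_differential_equation {n m p : ℕ}
    (A : Matrix (Fin n) (Fin n) ℝ) (B : Matrix (Fin n) (Fin m) ℝ)
    (C : Matrix (Fin p) (Fin n) ℝ)
    (T a b : ℝ) (hIT : Set.Ioo a b ⊆ Set.Iio T)
    (hW : ∀ t ∈ Set.Ioo a b, IsUnit (gramianW A B C t T)) :
    ∀ t ∈ Set.Ioo a b,
      HasDerivAt (riccatiP A B C T)
        (-(Aᵀ * riccatiP A B C T t) - riccatiP A B C T t * A +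
          riccatiP A B C T t * B * Bᵀ * riccatiP A B C T t) t := by
  intro t ht
  have hE₁ := hasDerivAt_expTsub_left Aᵀ T t
  have hE₂ := hasDerivAt_expTsub_right A T t
  have hWf := hasDerivAt_gramian A B C T t
  have hWi := hasDerivAt_matrix_inv hWf (hW t ht)
  have h1 := hE₁.matMul (hasDerivAt_const t Cᵀ)
  have h2 := h1.matMul hWi
  have h3 := h2.matMul (hasDerivAt_const t C)
  have h4 := h3.matMul hE₂
  have hfun : riccatiP A B C T = fun u =>
      NormedSpace.exp ((T - u) • Aᵀ) * Cᵀ * (gramianW A B C u T)⁻¹ *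
        C * NormedSpace.exp ((T - u) • A) := rfl
  rw [hfun]
  convert h4 using 1
  simp only [riccatiP, Matrix.mul_zero, add_zero, Matrix.neg_mul, Matrix.mul_neg, neg_neg,
    Matrix.mul_assoc, Matrix.add_mul, sub_eq_add_neg]
  abel
end

section
/- Let P_0 ∈ ℝ^{n×n} be symmetric positive semidefinite with A^T P_0 + P_0 A = P_0 B B^T P_0, and suppose A − B B^T P_0 is Hurwitz. If x : [0,∞) → ℝ^n solves ẋ = (A − B B^T P_0) x with x(0) = x_0, then ∫_0^∞ ‖B^T P_0 x(t)‖² dt = x_0^T P_0 x_0; that is, the feedback u = −B^T P_0 x incurs total control energy exactly x_0^T P_0 x_0. -/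
open Matrix MeasureTheory

/-- A real square matrix is Hurwitz if every eigenvalue of its complexification has strictly
negative real part. -/
def IsHurwitz {n : ℕ} (M : Matrix (Fin n) (Fin n) ℝ) : Prop :=
  ∀ μ ∈ spectrum ℂ (M.map (algebraMap ℝ ℂ)), μ.re < 0

open Filter Topology Set

attribute [local instance] Matrix.linftyOpNormedRing Matrix.linftyOpNormedAlgebra

noncomputable def mulVecCLM {𝕜 : Type*} [NontriviallyNormedField 𝕜] [CompleteSpace 𝕜] {n : ℕ}
    (v : Fin n → 𝕜) : Matrix (Fin n) (Fin n) 𝕜 →L[𝕜] (Fin n → 𝕜) :=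
  LinearMap.toContinuousLinearMap
    { toFun := fun X => X.mulVec v
      map_add' := fun X Y => Matrix.add_mulVec X Y v
      map_smul' := fun c X => Matrix.smul_mulVec c X v }

@[simp] lemma mulVecCLM_apply {𝕜 : Type*} [NontriviallyNormedField 𝕜] [CompleteSpace 𝕜] {n : ℕ}
    (v : Fin n → 𝕜) (X : Matrix (Fin n) (Fin n) 𝕜) : mulVecCLM v X = X.mulVec v := rfl

lemma tendsto_genEig {n : ℕ} (M : Matrix (Fin n) (Fin n) ℂ) {μ : ℂ} (hμ : μ.re < 0)
    {v : Fin n → ℂ} {K : ℕ} (hv : ((M - μ • 1) ^ K).mulVec v = 0) :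
    Tendsto (fun t : ℝ => (NormedSpace.exp ((t : ℂ) • M)).mulVec v) atTop (𝓝 0) := by
  set N : Matrix (Fin n) (Fin n) ℂ := M - μ • 1 with hN
  have key : ∀ t : ℝ, (NormedSpace.exp ((t : ℂ) • M)).mulVec v
      = ∑ i ∈ Finset.range K,
          (Complex.exp (t * μ) * ((t : ℂ) ^ i * ((i.factorial : ℂ))⁻¹)) • ((N ^ i).mulVec v) := by
    intro t
    have hsplit : (t : ℂ) • M = (t * μ) • (1 : Matrix (Fin n) (Fin n) ℂ) + (t : ℂ) • N := by
      rw [hN, smul_sub, smul_smul]; abel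
    have hcomm : Commute ((t * μ) • (1 : Matrix (Fin n) (Fin n) ℂ)) ((t : ℂ) • N) :=
      ((Commute.one_left N).smul_left _).smul_right _
    rw [hsplit, Matrix.exp_add_of_commute _ _ hcomm]
    have h1 : NormedSpace.exp ((t * μ) • (1 : Matrix (Fin n) (Fin n) ℂ))
        = Complex.exp (t * μ) • 1 := by
      rw [Complex.exp_eq_exp_ℂ, ← Algebra.algebraMap_eq_smul_one, ← Algebra.algebraMap_eq_smul_one]
      exact (NormedSpace.algebraMap_exp_comm _).symm
    have h2 : (NormedSpace.exp ((t : ℂ) • N)).mulVec v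
        = ∑ i ∈ Finset.range K, (((t : ℂ) ^ i * ((i.factorial : ℂ))⁻¹)) • ((N ^ i).mulVec v) := by
      have hsum := NormedSpace.expSeries_summable' (𝕂 := ℂ) ((t : ℂ) • N)
      have hmap : (NormedSpace.exp ((t : ℂ) • N)).mulVec v
          = ∑' i : ℕ, ((i.factorial : ℂ))⁻¹ • (((t : ℂ) • N) ^ i).mulVec v := by
        rw [← mulVecCLM_apply v, NormedSpace.exp_eq_tsum (𝕂 := ℂ)]
        rw [(mulVecCLM v).map_tsum hsum]
        simp
      rw [hmap]
      rw [tsum_eq_sum (s := Finset.range K) ?_]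
      · refine Finset.sum_congr rfl fun i _ => ?_
        rw [smul_pow, Matrix.smul_mulVec, smul_smul, mul_comm]
      · intro i hi
        have hiK : K ≤ i := by simpa using hi
        have : (N ^ i).mulVec v = 0 := by
          have : N ^ i = N ^ (i - K) * N ^ K := by
            rw [← pow_add]; congr 1; omega
          rw [this, ← Matrix.mulVec_mulVec, hv, Matrix.mulVec_zero]
        rw [smul_pow, Matrix.smul_mulVec, this, smul_zero, smul_zero]
    rw [h1, smul_mul_assoc, one_mul, Matrix.smul_mulVec, h2, Finset.smul_sum]
    refine Finset.sum_congr rfl fun i _ => ?_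
    rw [smul_smul]
  have hterm : ∀ i : ℕ, Tendsto (fun t : ℝ =>
      Complex.exp (t * μ) * ((t : ℂ) ^ i * ((i.factorial : ℂ))⁻¹)) atTop (𝓝 0) := by
    intro i
    rw [tendsto_zero_iff_norm_tendsto_zero]
    set b : ℝ := -μ.re with hb
    have hbpos : 0 < b := by simpa [hb] using hμ
    have base : Tendsto (fun s : ℝ => s ^ i * Real.exp (-s)) atTop (𝓝 0) :=
      Real.tendsto_pow_mul_exp_neg_atTop_nhds_zero i
    have comp : Tendsto (fun t : ℝ => (b * t) ^ i * Real.exp (-(b * t))) atTop (𝓝 0) :=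
      base.comp (tendsto_id.const_mul_atTop hbpos)
    have final := comp.const_mul (((i.factorial : ℝ))⁻¹ * (b⁻¹) ^ i)
    rw [mul_zero] at final
    refine final.congr' ?_
    filter_upwards [eventually_gt_atTop 0] with t ht
    have habs : |t| = t := abs_of_pos ht
    have hexp : -(b * t) = t * μ.re := by rw [hb]; ring
    rw [hexp, norm_mul, norm_mul, Complex.norm_exp,
      norm_pow, norm_inv]
    simp only [Complex.mul_re, Complex.ofReal_re, Complex.ofReal_im, Complex.norm_real,
      Complex.norm_natCast, Real.norm_eq_abs, habs, zero_mul, sub_zero]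
    field_simp
    simp only [one_div, ← mul_pow, inv_mul_cancel_left₀ hbpos.ne']
  have hlim : Tendsto (fun t : ℝ => ∑ i ∈ Finset.range K,
      (Complex.exp (t * μ) * ((t : ℂ) ^ i * ((i.factorial : ℂ))⁻¹)) • ((N ^ i).mulVec v))
      atTop (𝓝 0) := by
    have := tendsto_finset_sum (Finset.range K)
      (fun i _ => (hterm i).smul_const ((N ^ i).mulVec v))
    simpa using this
  exact hlim.congr fun t => (key t).symm

lemma tendsto_exp_mulVec_complex {n : ℕ} (M : Matrix (Fin n) (Fin n) ℂ)
    (hM : ∀ μ ∈ spectrum ℂ M, μ.re < 0) (v : Fin n → ℂ) :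
    Tendsto (fun t : ℝ => (NormedSpace.exp ((t : ℂ) • M)).mulVec v) atTop (𝓝 0) := by
  set f : Module.End ℂ (Fin n → ℂ) := Matrix.toLinAlgEquiv' M with hf
  have htop : ⨆ μ, f.maxGenEigenspace μ = ⊤ := Module.End.iSup_maxGenEigenspace_eq_top f
  have hv : v ∈ ⨆ μ, f.maxGenEigenspace μ := htop ▸ Submodule.mem_top
  obtain ⟨c, hc, hsum⟩ := (Submodule.mem_iSup_iff_exists_finsupp _ _).mp hv
  have hterm : ∀ μ ∈ c.support, Tendsto
      (fun t : ℝ => (NormedSpace.exp ((t : ℂ) • M)).mulVec (c μ)) atTop (𝓝 0) := by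
    intro μ _
    rcases eq_or_ne (c μ) 0 with h0 | h0
    · simpa [h0] using (tendsto_const_nhds : Tendsto (fun _ : ℝ => (0 : Fin n → ℂ)) atTop (𝓝 0))
    · obtain ⟨k, hk⟩ := (Module.End.mem_maxGenEigenspace f μ (c μ)).mp (hc μ)
      have hmatlin : Matrix.toLinAlgEquiv' ((M - μ • 1) ^ k) = (f - μ • 1) ^ k := by
        rw [map_pow, map_sub, _root_.map_smul, _root_.map_one]
      have hmat : ((M - μ • 1) ^ k).mulVec (c μ) = 0 := by
        have h1 : Matrix.toLinAlgEquiv' ((M - μ • 1) ^ k) (c μ) = 0 := by rw [hmatlin]; exact hk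
        rw [show (Matrix.toLinAlgEquiv' ((M - μ • 1) ^ k)) (c μ) = ((M - μ • 1) ^ k).mulVec (c μ) from rfl] at h1
        exact h1
      have hgen : f.HasGenEigenvalue μ k := by
        rw [Module.End.hasGenEigenvalue_iff]
        refine Submodule.ne_bot_iff _ |>.mpr ⟨c μ, ?_, h0⟩
        rw [Module.End.genEigenspace_nat]
        exact LinearMap.mem_ker.mpr hk
      have hspec : μ ∈ spectrum ℂ M := by
        have h2 := (Module.End.hasEigenvalue_of_hasGenEigenvalue hgen).mem_spectrum
        rwa [hf, AlgEquiv.spectrum_eq] at h2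
      exact tendsto_genEig M (hM μ hspec) hmat
  rw [← hsum, Finsupp.sum]
  have htot := tendsto_finset_sum c.support hterm
  rw [Finset.sum_const_zero] at htot
  refine htot.congr fun t => ?_
  have h3 := (map_sum (Matrix.mulVecLin (NormedSpace.exp ((t:ℂ) • M))) (fun μ => c μ) c.support).symm
  simp only [Matrix.mulVecLin_apply] at h3
  exact h3

lemma tendsto_exp_mulVec_real {n : ℕ} (M : Matrix (Fin n) (Fin n) ℝ) (h : IsHurwitz M)
    (v : Fin n → ℝ) :
    Tendsto (fun t : ℝ => (NormedSpace.exp (t • M)).mulVec v) atTop (𝓝 0) := by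
  set Mc : Matrix (Fin n) (Fin n) ℂ := M.map (algebraMap ℝ ℂ) with hMc
  have hC := tendsto_exp_mulVec_complex Mc h (fun j => (v j : ℂ))
  have hkey : ∀ (t : ℝ) (i : Fin n), (((NormedSpace.exp (t • M)).mulVec v i : ℝ) : ℂ)
      = (NormedSpace.exp ((t : ℂ) • Mc)).mulVec (fun j => (v j : ℂ)) i := by
    intro t i
    have hmv := RingHom.map_mulVec (algebraMap ℝ ℂ) (NormedSpace.exp (t • M)) v i
    rw [show (algebraMap ℝ ℂ) ((NormedSpace.exp (t • M)).mulVec v i)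
        = (((NormedSpace.exp (t • M)).mulVec v i : ℝ) : ℂ) from rfl] at hmv
    rw [hmv]
    have hcont : Continuous ((algebraMap ℝ ℂ).mapMatrix :
        Matrix (Fin n) (Fin n) ℝ → Matrix (Fin n) (Fin n) ℂ) := by
      show Continuous fun X : Matrix (Fin n) (Fin n) ℝ => X.map (algebraMap ℝ ℂ)
      exact continuous_id.matrix_map Complex.continuous_ofReal
    have hexp : (NormedSpace.exp (t • M)).map (algebraMap ℝ ℂ)
        = NormedSpace.exp ((t : ℂ) • Mc) := by
      have h1 : (algebraMap ℝ ℂ).mapMatrix (NormedSpace.exp (t • M))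
          = NormedSpace.exp ((algebraMap ℝ ℂ).mapMatrix (t • M)) :=
        NormedSpace.map_exp ((algebraMap ℝ ℂ).mapMatrix) hcont (t • M)
      have h2 : (algebraMap ℝ ℂ).mapMatrix (t • M) = t • Mc := by
        ext i j
        show ((t • M) i j : ℂ) = t • (Mc i j)
        rw [Matrix.smul_apply, smul_eq_mul, Complex.ofReal_mul, Complex.real_smul]
        rfl
      have h3 : (t : ℂ) • Mc = t • Mc := algebraMap_smul ℂ t Mc
      rw [show (NormedSpace.exp (t • M)).map (algebraMap ℝ ℂ)
          = (algebraMap ℝ ℂ).mapMatrix (NormedSpace.exp (t • M)) from rfl, h1, h2, h3]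
    rw [hexp]
    rfl
  rw [tendsto_pi_nhds]
  intro i
  have hCi : Tendsto (fun t : ℝ => (NormedSpace.exp ((t : ℂ) • Mc)).mulVec
      (fun j => (v j : ℂ)) i) atTop (𝓝 0) := (tendsto_pi_nhds.mp hC i)
  have := (Complex.continuous_re.tendsto 0).comp hCi
  simp only [Complex.zero_re] at this
  refine this.congr fun t => ?_
  rw [Function.comp_apply, ← hkey t i, Complex.ofReal_re]

lemma hasDerivWithinAt_quadForm {n : ℕ} (P : Matrix (Fin n) (Fin n) ℝ)
    {x : ℝ → Fin n → ℝ} {x' : Fin n → ℝ} {s : Set ℝ} {t : ℝ}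
    (hx : HasDerivWithinAt x x' s t) :
    HasDerivWithinAt (fun τ => x τ ⬝ᵥ P.mulVec (x τ))
      (x' ⬝ᵥ P.mulVec (x t) + x t ⬝ᵥ P.mulVec x') s t := by
  have hxi : ∀ i, HasDerivWithinAt (fun τ => x τ i) (x' i) s t := fun i => by
    exact ((ContinuousLinearMap.proj i).hasFDerivAt.comp_hasDerivWithinAt t hx :
      HasDerivWithinAt (⇑(ContinuousLinearMap.proj (R := ℝ) (φ := fun _ : Fin n => ℝ) i) ∘ x)
        _ s t)
  have hsum : HasDerivWithinAt (fun τ => ∑ i, x τ i * ∑ j, P i j * x τ j)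
      (∑ i, (x' i * ∑ j, P i j * x t j + x t i * ∑ j, P i j * x' j)) s t := by
    refine HasDerivWithinAt.fun_sum fun i _ => ?_
    exact (hxi i).mul (HasDerivWithinAt.fun_sum fun j _ => ((hxi j).const_mul (P i j)))
  have h1 : (fun τ => x τ ⬝ᵥ P.mulVec (x τ)) = fun τ => ∑ i, x τ i * ∑ j, P i j * x τ j := by
    funext τ; simp [dotProduct, Matrix.mulVec]
  have h2 : x' ⬝ᵥ P.mulVec (x t) + x t ⬝ᵥ P.mulVec x'
      = ∑ i, (x' i * ∑ j, P i j * x t j + x t i * ∑ j, P i j * x' j) := by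
    simp [dotProduct, Matrix.mulVec, Finset.sum_add_distrib]
  rw [h1, h2]; exact hsum

lemma quad_algebra {n m : ℕ} (A : Matrix (Fin n) (Fin n) ℝ) (B : Matrix (Fin n) (Fin m) ℝ)
    (P₀ : Matrix (Fin n) (Fin n) ℝ) (hsym : P₀ᵀ = P₀)
    (hare : Aᵀ * P₀ + P₀ * A = P₀ * B * Bᵀ * P₀) (w : Fin n → ℝ) :
    ((A - B * Bᵀ * P₀).mulVec w) ⬝ᵥ (P₀.mulVec w)
      + w ⬝ᵥ (P₀.mulVec ((A - B * Bᵀ * P₀).mulVec w))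
      = -(∑ k, ((Bᵀ * P₀).mulVec w k) ^ 2) := by
  set M : Matrix (Fin n) (Fin n) ℝ := A - B * Bᵀ * P₀ with hM
  have hMt : Mᵀ = Aᵀ - P₀ * (B * Bᵀ) := by
    rw [hM, Matrix.transpose_sub]
    congr 1
    rw [Matrix.transpose_mul, Matrix.transpose_mul, Matrix.transpose_transpose, hsym]
  have hkey : Mᵀ * P₀ + P₀ * M = -(P₀ * B * Bᵀ * P₀) := by
    have h1 : Mᵀ * P₀ + P₀ * M
        = (Aᵀ * P₀ + P₀ * A) - (P₀ * (B * Bᵀ) * P₀ + P₀ * (B * Bᵀ * P₀)) := by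
      rw [hMt, hM]; noncomm_ring
    have hassoc : P₀ * B * Bᵀ * P₀ = P₀ * (B * Bᵀ) * P₀ := by rw [Matrix.mul_assoc P₀ B Bᵀ]
    have hassoc2 : P₀ * (B * Bᵀ * P₀) = P₀ * (B * Bᵀ) * P₀ := by rw [← Matrix.mul_assoc]
    rw [h1, hare, hassoc, hassoc2]
    abel
  have e1 : (M.mulVec w) ⬝ᵥ (P₀.mulVec w) = w ⬝ᵥ ((Mᵀ * P₀).mulVec w) := by
    calc (M.mulVec w) ⬝ᵥ (P₀.mulVec w) = (P₀.mulVec w) ⬝ᵥ (M.mulVec w) :=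
          dotProduct_comm _ _
      _ = ((P₀.mulVec w) ᵥ* M) ⬝ᵥ w := dotProduct_mulVec _ _ _
      _ = (Mᵀ.mulVec (P₀.mulVec w)) ⬝ᵥ w := by rw [Matrix.mulVec_transpose]
      _ = w ⬝ᵥ (Mᵀ.mulVec (P₀.mulVec w)) := dotProduct_comm _ _
      _ = w ⬝ᵥ ((Mᵀ * P₀).mulVec w) := by rw [Matrix.mulVec_mulVec]
  have e2 : w ⬝ᵥ (P₀.mulVec (M.mulVec w)) = w ⬝ᵥ ((P₀ * M).mulVec w) := by
    rw [Matrix.mulVec_mulVec]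
  have hY : (Bᵀ * P₀)ᵀ * (Bᵀ * P₀) = P₀ * B * Bᵀ * P₀ := by
    rw [Matrix.transpose_mul, Matrix.transpose_transpose, hsym, ← Matrix.mul_assoc]
  have e3 : ∑ k, ((Bᵀ * P₀).mulVec w k) ^ 2 = w ⬝ᵥ ((P₀ * B * Bᵀ * P₀).mulVec w) := by
    set u : Fin m → ℝ := (Bᵀ * P₀).mulVec w with hu
    calc ∑ k, (u k) ^ 2 = u ⬝ᵥ u := by simp [dotProduct, sq]
      _ = (u ᵥ* (Bᵀ * P₀)) ⬝ᵥ w := by rw [← dotProduct_mulVec]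
      _ = (((Bᵀ * P₀)ᵀ).mulVec u) ⬝ᵥ w := by rw [Matrix.mulVec_transpose]
      _ = w ⬝ᵥ (((Bᵀ * P₀)ᵀ).mulVec u) := dotProduct_comm _ _
      _ = w ⬝ᵥ ((((Bᵀ * P₀)ᵀ) * (Bᵀ * P₀)).mulVec w) := by rw [hu, Matrix.mulVec_mulVec]
      _ = w ⬝ᵥ ((P₀ * B * Bᵀ * P₀).mulVec w) := by rw [hY]
  calc (M.mulVec w) ⬝ᵥ (P₀.mulVec w) + w ⬝ᵥ (P₀.mulVec (M.mulVec w))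
      = w ⬝ᵥ ((Mᵀ * P₀).mulVec w) + w ⬝ᵥ ((P₀ * M).mulVec w) := by rw [e1, e2]
    _ = w ⬝ᵥ ((Mᵀ * P₀ + P₀ * M).mulVec w) := by
        rw [Matrix.add_mulVec, dotProduct_add]
    _ = w ⬝ᵥ ((-(P₀ * B * Bᵀ * P₀)).mulVec w) := by rw [hkey]
    _ = -(w ⬝ᵥ ((P₀ * B * Bᵀ * P₀).mulVec w)) := by
        rw [Matrix.neg_mulVec, dotProduct_neg]
    _ = -(∑ k, ((Bᵀ * P₀).mulVec w k) ^ 2) := by rw [e3]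


/-- If `P₀` is symmetric positive semidefinite with
`Aᵀ P₀ + P₀ A = P₀ B Bᵀ P₀` and `A − B Bᵀ P₀` is Hurwitz, then along any solution of the
closed loop `ẋ = (A − B Bᵀ P₀) x`, `x(0) = x₀`, the total energy of the feedback
`u = −Bᵀ P₀ x` is `∫_0^∞ ‖Bᵀ P₀ x(t)‖² dt = x₀ᵀ P₀ x₀`. -/
theorem closed_loop_energy_identity {n m : ℕ}
    (A : Matrix (Fin n) (Fin n) ℝ) (B : Matrix (Fin n) (Fin m) ℝ)
    (P₀ : Matrix (Fin n) (Fin n) ℝ) (hP : P₀.PosSemidef)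
    (hare : Aᵀ * P₀ + P₀ * A = P₀ * B * Bᵀ * P₀)
    (hhur : IsHurwitz (A - B * Bᵀ * P₀))
    (x : ℝ → Fin n → ℝ) (x₀ : Fin n → ℝ) (hx0 : x 0 = x₀)
    (hode : ∀ t ∈ Set.Ici (0:ℝ),
      HasDerivWithinAt x ((A - B * Bᵀ * P₀).mulVec (x t)) (Set.Ici 0) t) :
    ∫ t in Set.Ioi (0:ℝ), ∑ k, ((Bᵀ * P₀).mulVec (x t) k) ^ 2 =
      dotProduct x₀ (P₀.mulVec x₀) := by

  have hsym : P₀ᵀ = P₀ := by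
    rw [← Matrix.conjTranspose_eq_transpose_of_trivial]; exact hP.1
  -- the explicit solution
  have hy : ∀ t : ℝ, HasDerivAt
      (fun t : ℝ => (NormedSpace.exp (t • (A - B * Bᵀ * P₀))).mulVec x₀)
      ((A - B * Bᵀ * P₀).mulVec ((NormedSpace.exp (t • (A - B * Bᵀ * P₀))).mulVec x₀)) t := by
    intro t
    have h1 := hasDerivAt_exp_smul_const' (𝕂 := ℝ) (A - B * Bᵀ * P₀) t
    have h2 := (mulVecCLM x₀).hasFDerivAt.comp_hasDerivAt t h1
    simp only [Function.comp_def, mulVecCLM_apply] at h2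
    rw [Matrix.mulVec_mulVec]
    exact h2
  have hxy : Set.EqOn x (fun t : ℝ => (NormedSpace.exp (t • (A - B * Bᵀ * P₀))).mulVec x₀)
      (Set.Ici 0) := by
    intro T hT
    have hT' : (0:ℝ) ≤ T := hT
    set L : (Fin n → ℝ) →L[ℝ] (Fin n → ℝ) :=
      LinearMap.toContinuousLinearMap (Matrix.mulVecLin (A - B * Bᵀ * P₀)) with hL
    have hlip : ∀ t : ℝ, LipschitzWith ‖L‖₊ (fun w : Fin n → ℝ => (A - B * Bᵀ * P₀).mulVec w) := by
      intro t
      have hcoe : ⇑L = fun w : Fin n → ℝ => (A - B * Bᵀ * P₀).mulVec w := rfl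
      simpa [hcoe] using L.lipschitz
    refine ODE_solution_unique (v := fun _ w => (A - B * Bᵀ * P₀).mulVec w) hlip
      (fun s hs => ((hode s hs.1).continuousWithinAt).mono Set.Icc_subset_Ici_self)
      (fun s hs => (hode s hs.1).mono (Set.Ici_subset_Ici.mpr hs.1))
      (fun s _ => (hy s).continuousAt.continuousWithinAt)
      (fun s _ => (hy s).hasDerivWithinAt) ?_ ⟨hT', le_rfl⟩
    rw [hx0]
    show x₀ = (NormedSpace.exp ((0:ℝ) • (A - B * Bᵀ * P₀))).mulVec x₀
    rw [zero_smul, NormedSpace.exp_zero, Matrix.one_mulVec]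
  -- continuity of the quadratic form
  have hcont2 : Continuous fun w : Fin n → ℝ => w ⬝ᵥ P₀.mulVec w := by
    simp only [dotProduct, Matrix.mulVec]
    exact continuous_finset_sum _ fun i _ => (continuous_apply i).mul
      (continuous_finset_sum _ fun j _ => continuous_const.mul (continuous_apply j))
  have hytend : Tendsto (fun t : ℝ => (NormedSpace.exp (t • (A - B * Bᵀ * P₀))).mulVec x₀)
      atTop (𝓝 0) := tendsto_exp_mulVec_real _ hhur x₀
  have hVx : Tendsto (fun t => -(x t ⬝ᵥ P₀.mulVec (x t))) atTop (𝓝 0) := by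
    have h3 : Tendsto (fun t : ℝ => x t ⬝ᵥ P₀.mulVec (x t)) atTop (𝓝 0) := by
      have h4 := (hcont2.tendsto 0).comp hytend
      simp only [Matrix.mulVec_zero, dotProduct_zero] at h4
      refine h4.congr' ?_
      filter_upwards [eventually_ge_atTop (0:ℝ)] with t ht
      rw [Function.comp_apply,
        show x t = NormedSpace.exp (t • (A - B * Bᵀ * P₀)) *ᵥ x₀ from hxy ht]
    simpa using h3.neg
  -- derivative of the (negated) Lyapunov function
  have hder : ∀ t ∈ Set.Ici (0:ℝ), HasDerivWithinAt (fun τ => -(x τ ⬝ᵥ P₀.mulVec (x τ)))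
      (∑ k, ((Bᵀ * P₀).mulVec (x t) k) ^ 2) (Set.Ici 0) t := by
    intro t ht
    have h1 := (hasDerivWithinAt_quadForm P₀ (hode t ht)).neg
    rw [quad_algebra A B P₀ hsym hare (x t)] at h1
    rw [neg_neg] at h1
    exact h1
  have hint := integral_Ioi_of_hasDerivAt_of_nonneg (a := 0)
    (g := fun τ => -(x τ ⬝ᵥ P₀.mulVec (x τ)))
    (g' := fun τ => ∑ k, ((Bᵀ * P₀).mulVec (x τ) k) ^ 2)
    ((hder 0 Set.self_mem_Ici).continuousWithinAt)
    (fun t ht => (hder t (Set.mem_Ici.mpr (le_of_lt ht))).hasDerivAt (Ici_mem_nhds ht))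
    (fun t _ => Finset.sum_nonneg fun k _ => sq_nonneg _) hVx
  rw [hint]
  simp [hx0]
end

section
/- Let P_0 ∈ ℝ^{n×n} be symmetric positive semidefinite with A^T P_0 + P_0 A = P_0 B B^T P_0 and A − B B^T P_0 Hurwitz. Consider N agents ẋ_i = A x_i + B u_i, y_i = C x_i under the static state feedback u = −(L(a) ⊗ B^T P_0) x, equivalently u_i = (Σ_{k=1}^N a_k)^{-1} Σ_{j=1}^N a_j B^T P_0 (x_j − x_i). Then the deviations δ_i = x_i − (Σ_{k=1}^N a_k)^{-1} Σ_{j=1}^N a_j x_j satisfy δ̇_i = (A − B B^T P_0) δ_i and converge to 0 as t → ∞; consequently the agents reach asymptotic output consensus: y_i(t) − y_j(t) → 0 as t → ∞ for all i, j. -/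
open Matrix MeasureTheory Filter

section Helpers

open NormedSpace

attribute [local instance] Matrix.linftyOpNormedRing Matrix.linftyOpNormedAlgebra

variable {𝕜 : Type*} [RCLike 𝕜] {n : ℕ}

/-- `mulVec` as a continuous linear map in the matrix argument with fixed vector. -/
noncomputable def mulVecCLMv (v : Fin n → 𝕜) :
    Matrix (Fin n) (Fin n) 𝕜 →L[𝕜] (Fin n → 𝕜) :=
  LinearMap.toContinuousLinearMap
    { toFun := fun X => X.mulVec v
      map_add' := fun X Y => Matrix.add_mulVec X Y v
      map_smul' := fun c X => Matrix.smul_mulVec c X v }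

@[simp] lemma mulVecCLMv_apply (v : Fin n → 𝕜) (X : Matrix (Fin n) (Fin n) 𝕜) :
    mulVecCLMv (𝕜 := 𝕜) (n := n) v X = X.mulVec v := rfl

/-- `mulVec` as a continuous bilinear-ish map. -/
noncomputable def mulVecCLM2 :
    Matrix (Fin n) (Fin n) 𝕜 →L[𝕜] (Fin n → 𝕜) →L[𝕜] (Fin n → 𝕜) :=
  LinearMap.toContinuousLinearMap
    { toFun := fun X => LinearMap.toContinuousLinearMap X.mulVecLin
      map_add' := by
        intro X Y; ext v
        simp [Matrix.add_mulVec]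
      map_smul' := by
        intro c X; ext v
        simp [Matrix.smul_mulVec] }

@[simp] lemma mulVecCLM2_apply (X : Matrix (Fin n) (Fin n) 𝕜) (v : Fin n → 𝕜) :
    mulVecCLM2 (𝕜 := 𝕜) (n := n) X v = X.mulVec v := rfl

lemma ode_solution_eq_exp (M : Matrix (Fin n) (Fin n) ℝ) (f : ℝ → Fin n → ℝ)
    (hf : ∀ t, HasDerivAt f (M.mulVec (f t)) t) (t : ℝ) :
    f t = (exp (t • M)).mulVec (f 0) := by
  set g : ℝ → Fin n → ℝ :=
    fun u => mulVecCLM2 (𝕜 := ℝ) (n := n) (exp ((-u) • M)) (f u) with hg_def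
  have hg : ∀ s, HasDerivAt g 0 s := by
    intro s
    have h1 : HasDerivAt (fun u : ℝ => exp ((-u) • M))
        ((-1 : ℝ) • (exp ((-s) • M) * M)) s := by
      have h0 := hasDerivAt_exp_smul_const (𝕂 := ℝ) M (-s)
      exact h0.scomp s (hasDerivAt_neg s)
    have h2 : HasDerivAt (fun u : ℝ => mulVecCLM2 (𝕜 := ℝ) (n := n) (exp ((-u) • M)))
        (mulVecCLM2 (𝕜 := ℝ) (n := n) ((-1 : ℝ) • (exp ((-s) • M) * M))) s :=
      ((mulVecCLM2 (𝕜 := ℝ) (n := n)).hasFDerivAt.comp_hasDerivAt s h1)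
    have h3 := h2.clm_apply (hf s)
    refine h3.congr_deriv ?_
    simp [Matrix.neg_mulVec, ← Matrix.mulVec_mulVec]
  have hconst : ∀ s, g s = g 0 := fun s =>
    is_const_of_deriv_eq_zero (fun u => (hg u).differentiableAt) (fun u => (hg u).deriv) s 0
  have hg0 : g 0 = f 0 := by simp [hg_def]
  have hgt : g t = f 0 := (hconst t).trans hg0
  have hcomm : Commute (t • M) ((-t) • M) := ((Commute.refl M).smul_left t).smul_right (-t)
  have hmul : exp (t • M) * exp ((-t) • M) = 1 := by
    refine (exp_add_of_commute hcomm).symm.trans ?_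
    simp
  calc f t = (exp (t • M) * exp ((-t) • M)).mulVec (f t) := by rw [hmul, Matrix.one_mulVec]
    _ = (exp (t • M)).mulVec ((exp ((-t) • M)).mulVec (f t)) := by
        rw [← Matrix.mulVec_mulVec]
    _ = (exp (t • M)).mulVec (f 0) := by
        rw [show (exp ((-t) • M)).mulVec (f t) = g t from rfl, hgt]

lemma pow_mul_exp_tendsto_zero {c : ℝ} (hc : c < 0) (j : ℕ) :
    Tendsto (fun t : ℝ => t ^ j * Real.exp (c * t)) atTop (nhds 0) := by
  have hb : (0 : ℝ) < -c := by linarith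
  have h1 : Tendsto (fun t : ℝ => (-c) * t) atTop atTop :=
    Tendsto.const_mul_atTop hb tendsto_id
  have h2 := (Real.tendsto_pow_mul_exp_neg_atTop_nhds_zero j).comp h1
  have h3 := h2.const_mul (((-c) ^ j)⁻¹)
  rw [mul_zero] at h3
  refine h3.congr (fun t => ?_)
  have hne : ((-c) ^ j) ≠ 0 := pow_ne_zero _ (ne_of_gt hb)
  simp only [Function.comp]
  rw [mul_pow]
  field_simp

lemma exp_mulVec_tendsto_zero (M : Matrix (Fin n) (Fin n) ℂ)
    (hM : ∀ μ ∈ spectrum ℂ M, μ.re < 0) (v : Fin n → ℂ) :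
    Tendsto (fun t : ℝ => (exp ((t : ℂ) • M)).mulVec v) atTop (nhds 0) := by
  set T : Module.End ℂ (Fin n → ℂ) := Matrix.toLinAlgEquiv' M with hT
  let S : Submodule ℂ (Fin n → ℂ) :=
    { carrier := {w | Tendsto (fun t : ℝ => (exp ((t : ℂ) • M)).mulVec w) atTop (nhds 0)}
      add_mem' := fun {u w} hu hw => by
        simpa [Matrix.mulVec_add] using hu.add hw
      zero_mem' := by simpa [Matrix.mulVec_zero] using (tendsto_const_nhds :
        Tendsto (fun _ : ℝ => (0 : Fin n → ℂ)) atTop (nhds 0))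
      smul_mem' := fun c w hw => by
        simpa [Matrix.mulVec_smul] using hw.const_smul c }
  suffices hS : ∀ μ, T.maxGenEigenspace μ ≤ S by
    have htop := Module.End.iSup_maxGenEigenspace_eq_top T
    have hle : (⊤ : Submodule ℂ (Fin n → ℂ)) ≤ S := htop ▸ iSup_le hS
    exact hle Submodule.mem_top
  intro μ w hw
  obtain ⟨k, hk⟩ := (Module.End.mem_maxGenEigenspace T μ w).mp hw
  by_cases hw0 : w = 0
  · rw [hw0]; exact S.zero_mem
  -- the eigenvalue has negative real part
  have hre : μ.re < 0 := by
    apply hM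
    have h1 : T.HasUnifEigenvalue μ ⊤ := by
      rw [Module.End.HasUnifEigenvalue, Submodule.ne_bot_iff]
      exact ⟨w, hw, hw0⟩
    have h2 : T.HasEigenvalue μ := h1.lt (by norm_num)
    have h3 := h2.mem_spectrum
    rwa [hT, AlgEquiv.spectrum_eq] at h3
  -- matrix nilpotency on w
  set Nc : Matrix (Fin n) (Fin n) ℂ := M - μ • 1 with hNdef
  have hNck : (Nc ^ k).mulVec w = 0 := by
    have hTN : (T - μ • (1 : Module.End ℂ (Fin n → ℂ))) ^ k = Matrix.toLinAlgEquiv' (Nc ^ k) := by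
      rw [map_pow, map_sub, _root_.map_smul, _root_.map_one, hT]
    rw [hTN] at hk
    rwa [Matrix.toLinAlgEquiv'_apply] at hk
  have hvanish : ∀ j, k ≤ j → (Nc ^ j).mulVec w = 0 := by
    intro j hj
    have hpow : Nc ^ j = Nc ^ (j - k) * Nc ^ k := by rw [← pow_add]; congr 1; omega
    rw [hpow, ← Matrix.mulVec_mulVec, hNck, Matrix.mulVec_zero]
  -- split the exponential
  have hsplit : ∀ t : ℝ, (exp ((t : ℂ) • M)).mulVec w
      = ∑ j ∈ Finset.range k,
          (Complex.exp ((t : ℂ) * μ) * (t : ℂ) ^ j * ((j.factorial : ℂ))⁻¹) •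
            (Nc ^ j).mulVec w := by
    intro t
    have hMdecomp : (t : ℂ) • M
        = (t : ℂ) • (μ • (1 : Matrix (Fin n) (Fin n) ℂ)) + (t : ℂ) • Nc := by
      rw [← smul_add]; congr 1; simp [hNdef]
    have hcomm : Commute ((t : ℂ) • μ • (1 : Matrix (Fin n) (Fin n) ℂ)) ((t : ℂ) • Nc) :=
      (((Commute.one_left Nc).smul_left μ).smul_left (t : ℂ)).smul_right (t : ℂ)
    have hsc : exp ((t : ℂ) • μ • (1 : Matrix (Fin n) (Fin n) ℂ))
        = Complex.exp ((t : ℂ) * μ) • 1 := by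
      rw [smul_smul, ← Algebra.algebraMap_eq_smul_one,
        ← show algebraMap ℂ (Matrix (Fin n) (Fin n) ℂ) (exp ((t : ℂ) * μ))
          = exp (algebraMap ℂ (Matrix (Fin n) (Fin n) ℂ) ((t : ℂ) * μ)) from algebraMap_exp_comm _,
        ← Complex.exp_eq_exp_ℂ, Algebra.algebraMap_eq_smul_one]
    have hexpN : (exp ((t : ℂ) • Nc)).mulVec w
        = ∑ j ∈ Finset.range k, ((t : ℂ) ^ j * ((j.factorial : ℂ))⁻¹) • (Nc ^ j).mulVec w := by
      have hsum := expSeries_summable' (𝕂 := ℂ) ((t : ℂ) • Nc)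
      calc (exp ((t : ℂ) • Nc)).mulVec w
          = mulVecCLMv (𝕜 := ℂ) (n := n) w
              (∑' j : ℕ, ((j.factorial : ℂ))⁻¹ • ((t : ℂ) • Nc) ^ j) := by
            rw [exp_eq_tsum ℂ]; rfl
        _ = ∑' j : ℕ, mulVecCLMv (𝕜 := ℂ) (n := n) w
              (((j.factorial : ℂ))⁻¹ • ((t : ℂ) • Nc) ^ j) :=
            ContinuousLinearMap.map_tsum _ hsum
        _ = ∑' j : ℕ, ((t : ℂ) ^ j * ((j.factorial : ℂ))⁻¹) • (Nc ^ j).mulVec w := by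
            refine tsum_congr fun j => ?_
            rw [mulVecCLMv_apply, smul_pow, Matrix.smul_mulVec, Matrix.smul_mulVec,
              smul_smul, mul_comm]
        _ = ∑ j ∈ Finset.range k, ((t : ℂ) ^ j * ((j.factorial : ℂ))⁻¹) • (Nc ^ j).mulVec w := by
            refine tsum_eq_sum fun j hj => ?_
            rw [hvanish j (by simpa using hj), smul_zero]
    have hadd : exp ((t : ℂ) • μ • (1 : Matrix (Fin n) (Fin n) ℂ) + (t : ℂ) • Nc)
        = exp ((t : ℂ) • μ • (1 : Matrix (Fin n) (Fin n) ℂ)) * exp ((t : ℂ) • Nc) :=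
      exp_add_of_commute hcomm
    rw [hMdecomp, hadd, hsc, smul_mul_assoc, one_mul,
      Matrix.smul_mulVec, hexpN, Finset.smul_sum]
    refine Finset.sum_congr rfl fun j _ => ?_
    rw [smul_smul, mul_assoc]
  -- conclude tendsto
  show Tendsto (fun t : ℝ => (exp ((t : ℂ) • M)).mulVec w) atTop (nhds 0)
  rw [funext hsplit]
  rw [show (0 : Fin n → ℂ) = ∑ j ∈ Finset.range k, (0 : Fin n → ℂ) by simp]
  refine tendsto_finset_sum _ fun j _ => ?_
  set wj := (Nc ^ j).mulVec w with hwj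
  have htend : Tendsto (fun t : ℝ =>
      ((j.factorial : ℝ)⁻¹ * ‖wj‖) * (t ^ j * Real.exp (μ.re * t))) atTop (nhds 0) := by
    have := (pow_mul_exp_tendsto_zero hre j).const_mul ((j.factorial : ℝ)⁻¹ * ‖wj‖)
    rwa [mul_zero] at this
  refine squeeze_zero_norm' ?_ htend
  filter_upwards [eventually_ge_atTop (0 : ℝ)] with t ht
  have hre' : ((t : ℂ) * μ).re = μ.re * t := by
    simp [Complex.mul_re]; ring
  have h1 : ‖(Complex.exp ((t : ℂ) * μ) * (t : ℂ) ^ j * ((j.factorial : ℂ))⁻¹) • wj‖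
      = Real.exp (μ.re * t) * (t ^ j * ((j.factorial : ℝ)⁻¹ * ‖wj‖)) := by
    rw [norm_smul, norm_mul, norm_mul, Complex.norm_exp,
      hre', norm_pow, Complex.norm_real, Real.norm_eq_abs, abs_of_nonneg ht, norm_inv,
      Complex.norm_natCast]
    ring
  rw [h1]
  exact le_of_eq (by ring)

lemma complexify_mulVec (X : Matrix (Fin n) (Fin n) ℝ) (v : Fin n → ℝ) :
    (X.map (algebraMap ℝ ℂ)).mulVec (fun i => (v i : ℂ)) = fun i => ((X.mulVec v) i : ℂ) := by
  funext i
  simp only [Matrix.mulVec, dotProduct, Matrix.map_apply, algebraMap_smul]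
  push_cast
  rfl

lemma exp_map_complex (X : Matrix (Fin n) (Fin n) ℝ) :
    (exp X).map (algebraMap ℝ ℂ) = exp (X.map (algebraMap ℝ ℂ)) := by
  have hc : Continuous fun Y : Matrix (Fin n) (Fin n) ℝ =>
      ((algebraMap ℝ ℂ).mapMatrix Y : Matrix (Fin n) (Fin n) ℂ) :=
    Continuous.matrix_map continuous_id (continuous_algebraMap ℝ ℂ)
  have h := map_exp ((algebraMap ℝ ℂ).mapMatrix
    : Matrix (Fin n) (Fin n) ℝ →+* Matrix (Fin n) (Fin n) ℂ) hc X
  have h2 : (exp : Matrix (Fin n) (Fin n) ℂ → _) = exp :=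
    rfl
  simp only [RingHom.mapMatrix_apply] at h
  exact h

lemma hurwitz_ode_tendsto (M : Matrix (Fin n) (Fin n) ℝ)
    (hM : ∀ μ ∈ spectrum ℂ (M.map (algebraMap ℝ ℂ)), μ.re < 0)
    (f : ℝ → Fin n → ℝ) (hf : ∀ t, HasDerivAt f (M.mulVec (f t)) t) :
    Tendsto f atTop (nhds 0) := by
  have hsol := ode_solution_eq_exp M f hf
  set Mc := M.map (algebraMap ℝ ℂ) with hMc
  have key := exp_mulVec_tendsto_zero Mc hM (fun i => ((f 0 i : ℝ) : ℂ))
  have hcplx : ∀ t : ℝ, (exp ((t : ℂ) • Mc)).mulVec (fun i => ((f 0 i : ℝ) : ℂ))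
      = fun i => ((f t i : ℝ) : ℂ) := by
    intro t
    have h1 : (t : ℂ) • Mc = (t • M).map (algebraMap ℝ ℂ) := by
      ext i j
      simp [Matrix.map_apply, hMc]
    rw [h1, ← exp_map_complex, complexify_mulVec, ← hsol t]
  rw [tendsto_pi_nhds]
  intro i
  have h2 : Tendsto (fun t : ℝ =>
      (exp ((t : ℂ) • Mc)).mulVec (fun i => ((f 0 i : ℝ) : ℂ)) i) atTop (nhds 0) := by
    have := ((continuous_apply i).tendsto (0 : Fin n → ℂ)).comp key
    simpa [Function.comp_def] using this
  have h3 : Tendsto (fun t : ℝ =>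
      ((exp ((t : ℂ) • Mc)).mulVec (fun i => ((f 0 i : ℝ) : ℂ)) i).re) atTop (nhds 0) := by
    have := (Complex.continuous_re.tendsto (0 : ℂ)).comp h2
    simpa [Function.comp_def] using this
  refine h3.congr fun t => ?_
  rw [hcplx t]
  simp

lemma mulVec_sum {q r : ℕ} (M : Matrix (Fin q) (Fin r) ℝ) {ι : Type*} (s : Finset ι)
    (f : ι → Fin r → ℝ) : M.mulVec (∑ i ∈ s, f i) = ∑ i ∈ s, M.mulVec (f i) := by
  funext r'
  simp only [Matrix.mulVec, dotProduct, Finset.sum_apply, Finset.mul_sum]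
  exact Finset.sum_comm


end Helpers

/-- Under the static state feedback
`uᵢ = (∑_k a_k)⁻¹ ∑_j a_j Bᵀ P₀ (x_j − x_i)` (i.e. `u = −(L(a) ⊗ Bᵀ P₀) x`), the deviations
`δᵢ = xᵢ − (∑_k a_k)⁻¹ ∑_j a_j x_j` satisfy `δ̇ᵢ = (A − B Bᵀ P₀) δᵢ`, converge to `0`, and the
agents reach asymptotic output consensus. -/
theorem asymptotic_output_consensus_state_feedback {n m p N : ℕ}
    (A : Matrix (Fin n) (Fin n) ℝ) (B : Matrix (Fin n) (Fin m) ℝ)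
    (C : Matrix (Fin p) (Fin n) ℝ) (hC : C.rank = p)
    (P₀ : Matrix (Fin n) (Fin n) ℝ) (hP : P₀.PosSemidef)
    (hare : Aᵀ * P₀ + P₀ * A = P₀ * B * Bᵀ * P₀)
    (hhur : IsHurwitz (A - B * Bᵀ * P₀))
    (a : Fin N → ℝ) (ha : ∀ i, 0 < a i)
    (x : ℝ → Fin N → Fin n → ℝ)
    (hode : ∀ (i : Fin N) (t : ℝ),
      HasDerivAt (fun s => x s i)
        (A.mulVec (x t i) +
          B.mulVec ((∑ k, a k)⁻¹ •
            ∑ j, a j • (Bᵀ * P₀).mulVec (x t j - x t i))) t) :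
    (∀ (i : Fin N) (t : ℝ),
      HasDerivAt (fun s => x s i - (∑ k, a k)⁻¹ • ∑ j, a j • x s j)
        ((A - B * Bᵀ * P₀).mulVec (x t i - (∑ k, a k)⁻¹ • ∑ j, a j • x t j)) t) ∧
    (∀ i : Fin N,
      Tendsto (fun t => x t i - (∑ k, a k)⁻¹ • ∑ j, a j • x t j) atTop (nhds 0)) ∧
    (∀ i j : Fin N,
      Tendsto (fun t => C.mulVec (x t i) - C.mulVec (x t j)) atTop (nhds 0)) := by
  have hderiv : ∀ (i : Fin N) (t : ℝ),
      HasDerivAt (fun s => x s i - (∑ k, a k)⁻¹ • ∑ j, a j • x s j)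
        ((A - B * Bᵀ * P₀).mulVec (x t i - (∑ k, a k)⁻¹ • ∑ j, a j • x t j)) t := by
    intro i t
    have hspos : (0 : ℝ) < ∑ k, a k :=
      Finset.sum_pos (fun k _ => ha k) ⟨i, Finset.mem_univ i⟩
    have hsne : (∑ k, a k) ≠ 0 := ne_of_gt hspos
    set c : ℝ := (∑ k, a k)⁻¹ with hc
    set K : Matrix (Fin n) (Fin n) ℝ := B * Bᵀ * P₀ with hK
    set S : Fin n → ℝ := ∑ j, a j • x t j with hS
    -- rewrite the derivative of each agent
    have hval : ∀ j : Fin N,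
        A.mulVec (x t j) + B.mulVec (c • ∑ j', a j' • (Bᵀ * P₀).mulVec (x t j' - x t j))
          = A.mulVec (x t j) - K.mulVec (x t j - c • S) := by
      intro j
      have e1 : ∑ j', a j' • (Bᵀ * P₀).mulVec (x t j' - x t j)
          = (Bᵀ * P₀).mulVec (S - (∑ k, a k) • x t j) := by
        calc ∑ j', a j' • (Bᵀ * P₀).mulVec (x t j' - x t j)
            = ∑ j', (Bᵀ * P₀).mulVec (a j' • (x t j' - x t j)) := by
              simp [Matrix.mulVec_smul]
          _ = (Bᵀ * P₀).mulVec (∑ j', a j' • (x t j' - x t j)) := (mulVec_sum _ _ _).symm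
          _ = (Bᵀ * P₀).mulVec (S - (∑ k, a k) • x t j) := by
              congr 1
              simp only [smul_sub, Finset.sum_sub_distrib, hS, ← Finset.sum_smul]
      have e2 : B.mulVec (c • (Bᵀ * P₀).mulVec (S - (∑ k, a k) • x t j))
          = K.mulVec (c • (S - (∑ k, a k) • x t j)) := by
        have hBK : B * (Bᵀ * P₀) = K := (Matrix.mul_assoc B Bᵀ P₀).symm
        rw [Matrix.mulVec_smul, Matrix.mulVec_smul, Matrix.mulVec_mulVec, hBK]
      have e3 : c • (S - (∑ k, a k) • x t j) = c • S - x t j := by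
        rw [smul_sub, smul_smul, hc, inv_mul_cancel₀ hsne, one_smul]
      rw [e1, e2, e3, show c • S - x t j = -(x t j - c • S) from (neg_sub _ _).symm,
        Matrix.mulVec_neg, ← sub_eq_add_neg]
    -- each agent's derivative in closed form
    have h1 : ∀ j : Fin N, HasDerivAt (fun u => x u j)
        (A.mulVec (x t j) - K.mulVec (x t j - c • S)) t := fun j => hval j ▸ hode j t
    -- the weighted average of deviations vanishes
    have hone : (∑ k, a k) • (c • S) = S := by
      rw [smul_smul, hc, mul_inv_cancel₀ hsne, one_smul]
    have hzero : ∑ j, a j • (x t j - c • S) = 0 := by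
      simp only [smul_sub, Finset.sum_sub_distrib, ← hS, ← Finset.sum_smul]
      rw [hone, sub_self]
    have hsum : HasDerivAt (fun u => ∑ j, a j • x u j)
        (∑ j, a j • (A.mulVec (x t j) - K.mulVec (x t j - c • S))) t :=
      HasDerivAt.fun_sum fun j _ => (h1 j).const_smul (a j)
    have hd := (h1 i).sub (hsum.const_smul c)
    have hmean : ∑ j, a j • (A.mulVec (x t j) - K.mulVec (x t j - c • S)) = A.mulVec S := by
      calc ∑ j, a j • (A.mulVec (x t j) - K.mulVec (x t j - c • S))
          = ∑ j, a j • A.mulVec (x t j) - ∑ j, a j • K.mulVec (x t j - c • S) := by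
            simp only [smul_sub, Finset.sum_sub_distrib]
        _ = A.mulVec S - K.mulVec (∑ j, a j • (x t j - c • S)) := by
            rw [hS, _root_.mulVec_sum, _root_.mulVec_sum]
            simp only [Matrix.mulVec_smul]
        _ = A.mulVec S := by rw [hzero, Matrix.mulVec_zero, sub_zero]
    have hval2 : (A.mulVec (x t i) - K.mulVec (x t i - c • S))
        - c • ∑ j, a j • (A.mulVec (x t j) - K.mulVec (x t j - c • S))
        = (A - K).mulVec (x t i - c • S) := by
      rw [hmean, ← Matrix.mulVec_smul, Matrix.sub_mulVec, Matrix.mulVec_sub A]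
      abel
    have hgoal : HasDerivAt (fun u => x u i - c • ∑ j, a j • x u j)
        ((A - K).mulVec (x t i - c • S)) t := hval2 ▸ hd
    rw [hS] at hgoal
    exact hgoal
  have htend : ∀ i : Fin N,
      Tendsto (fun t => x t i - (∑ k, a k)⁻¹ • ∑ j, a j • x t j) atTop (nhds 0) := by
    intro i
    exact hurwitz_ode_tendsto (A - B * Bᵀ * P₀) hhur
      (fun t => x t i - (∑ k, a k)⁻¹ • ∑ j, a j • x t j) (fun t => hderiv i t)
  refine ⟨hderiv, htend, ?_⟩
  intro i j
  have hCcont : Continuous fun v : Fin n → ℝ => C.mulVec v := by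
    have := LinearMap.continuous_of_finiteDimensional C.mulVecLin
    exact this
  have h0 : C.mulVec (0 : Fin n → ℝ) = 0 := Matrix.mulVec_zero C
  have hCi : Tendsto (fun t => C.mulVec (x t i - (∑ k, a k)⁻¹ • ∑ j, a j • x t j))
      atTop (nhds 0) := by
    have := (hCcont.tendsto 0).comp (htend i)
    rwa [h0] at this
  have hCj : Tendsto (fun t => C.mulVec (x t j - (∑ k, a k)⁻¹ • ∑ j', a j' • x t j'))
      atTop (nhds 0) := by
    have := (hCcont.tendsto 0).comp (htend j)
    rwa [h0] at this
  have hsub := hCi.sub hCj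
  rw [sub_zero] at hsub
  refine hsub.congr fun t => ?_
  rw [Matrix.mulVec_sub, Matrix.mulVec_sub]
  abel
end
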